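/- arXiv:1602.00220 — 9 statements merged into one kernel-verified Lean document; each statement's English description precedes it below -/
import Mathlib

section
/- Let f : ℝ^d → ℝ be bounded below with infimum f̲, let α > 0, N ∈ ℕ, k > 0, and let L_k be a Lipschitz constant of f on the closed ball B_k = {x ∈ ℝ^d : |x| ≤ k}. Then for all X = (X¹,…,X^N), X̂ = (X̂¹,…,X̂^N) ∈ (ℝ^d)^N with |X| ≤ k and |X̂| ≤ k (Euclidean norm on (ℝ^d)^N) and every i ∈ {1,…,N}, the drift components satisfy |F_N^i(X) − F_N^i(X̂)| ≤ |X^i − X̂^i| + (1 + (2 c_k / N)·√(N|X̂^i|² + |X̂|²))·|X − X̂|, where c_k = α L_k exp(α · sup_{x∈B_k}(f(x) − f̲)). -/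
open Finset

/-- The weight-averaged drift component `F_N^i(X)` of the consensus-based
optimization particle system, with weight `ω(x) = exp(-α f x)`. -/
noncomputable def driftFN {d N : ℕ} (α : ℝ) (f : EuclideanSpace ℝ (Fin d) → ℝ)
    (X : Fin N → EuclideanSpace ℝ (Fin d)) (i : Fin N) : EuclideanSpace ℝ (Fin d) :=
  (∑ j, Real.exp (-α * f (X j)))⁻¹ •
    ∑ j ∈ Finset.univ.erase i, Real.exp (-α * f (X j)) • (X i - X j)

/-- The Euclidean norm of `X = (X^1, …, X^N) ∈ (ℝ^d)^N`. -/
noncomputable def prodNorm {d N : ℕ} (X : Fin N → EuclideanSpace ℝ (Fin d)) : ℝ :=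
  Real.sqrt (∑ j, ‖X j‖ ^ 2)

lemma exp_sub_one_le (t : ℝ) (ht : 0 ≤ t) : Real.exp t - 1 ≤ t * (1 + Real.exp t) / 2 := by
  set g : ℝ → ℝ := fun t => t * (1 + Real.exp t) / 2 - (Real.exp t - 1) with hg
  have hd : ∀ s : ℝ, HasDerivAt g ((1 + Real.exp s) / 2 + s * Real.exp s / 2 - Real.exp s) s := by
    intro s
    have h1 : HasDerivAt (fun t : ℝ => t * (1 + Real.exp t)) (1 * (1 + Real.exp s) + s * Real.exp s) s :=
      (hasDerivAt_id s).mul ((Real.hasDerivAt_exp s).const_add 1)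
    have h2 := (h1.div_const 2).sub ((Real.hasDerivAt_exp s).sub_const 1)
    exact h2.congr_deriv (by ring)
  have hdiff : Differentiable ℝ g := fun s => (hd s).differentiableAt
  have hmono : Monotone g := by
    apply monotone_of_deriv_nonneg hdiff
    intro s
    rw [(hd s).deriv]
    have h3 : Real.exp s * (1 - s) ≤ 1 := by
      have h4 := Real.add_one_le_exp (-s)
      have h5 : Real.exp s * Real.exp (-s) = 1 := by
        rw [← Real.exp_add]; simp
      nlinarith [Real.exp_pos s]
    nlinarith
  have h0 : g 0 ≤ g t := hmono ht
  simp only [hg, Real.exp_zero] at h0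
  nlinarith [h0]

lemma abs_exp_sub_exp_le (x y : ℝ) :
    |Real.exp y - Real.exp x| ≤ |y - x| * (Real.exp x + Real.exp y) / 2 := by
  wlog h : x ≤ y with H
  · have := H y x (le_of_not_ge h)
    rw [abs_sub_comm (Real.exp x), abs_sub_comm x y, add_comm (Real.exp y)] at this
    linarith
  have key := exp_sub_one_le (y - x) (by linarith)
  have hx := Real.exp_pos x
  rw [abs_of_nonneg (by linarith [Real.exp_le_exp.2 h] : (0:ℝ) ≤ Real.exp y - Real.exp x),
    abs_of_nonneg (by linarith : (0:ℝ) ≤ y - x)]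
  have hyx : Real.exp y = Real.exp x * Real.exp (y - x) := by
    rw [← Real.exp_add]; ring_nf
  rw [hyx]
  nlinarith [key, hx, Real.exp_pos (y-x)]

lemma sum_mul_le_sqrt {N : ℕ} (v u : Fin N → ℝ) :
    ∑ j, v j * u j ≤ Real.sqrt (∑ j, v j ^ 2) * Real.sqrt (∑ j, u j ^ 2) := by
  calc ∑ j, v j * u j ≤ |∑ j, v j * u j| := le_abs_self _
    _ = Real.sqrt ((∑ j, v j * u j) ^ 2) := (Real.sqrt_sq_eq_abs _).symm
    _ ≤ Real.sqrt ((∑ j, v j ^ 2) * ∑ j, u j ^ 2) :=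
        Real.sqrt_le_sqrt (Finset.sum_mul_sq_le_sq_mul_sq _ _ _)
    _ = _ := Real.sqrt_mul (Finset.sum_nonneg fun j _ => sq_nonneg _) _

lemma comp_le_prodNorm {d N : ℕ} (X : Fin N → EuclideanSpace ℝ (Fin d)) (j : Fin N) :
    ‖X j‖ ≤ prodNorm X := by
  rw [prodNorm, show ‖X j‖ = Real.sqrt (‖X j‖ ^ 2) from (Real.sqrt_sq (norm_nonneg _)).symm]
  exact Real.sqrt_le_sqrt (Finset.single_le_sum (f := fun l => ‖X l‖ ^ 2)
    (fun l _ => sq_nonneg _) (mem_univ j))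

lemma drift_eq {d N : ℕ} (hN : 0 < N) (α : ℝ) (f : EuclideanSpace ℝ (Fin d) → ℝ)
    (X : Fin N → EuclideanSpace ℝ (Fin d)) (i : Fin N) :
    driftFN α f X i = X i - (∑ j, Real.exp (-α * f (X j)))⁻¹ •
      ∑ j, Real.exp (-α * f (X j)) • X j := by
  have : Nonempty (Fin N) := ⟨⟨0, hN⟩⟩
  set ω : Fin N → ℝ := fun j => Real.exp (-α * f (X j)) with hω
  set S : ℝ := ∑ j, ω j with hS
  have hSpos : 0 < S := Finset.sum_pos (fun j _ => Real.exp_pos _) univ_nonempty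
  rw [driftFN]
  have e1 : ∑ j ∈ univ.erase i, ω j • (X i - X j)
      = S • X i - ∑ j, ω j • X j := by
    have e2 : ∀ j, ω j • (X i - X j) = ω j • X i - ω j • X j := fun j => smul_sub _ _ _
    rw [Finset.sum_congr rfl fun j _ => e2 j, Finset.sum_sub_distrib, ← Finset.sum_smul,
      Finset.sum_erase_eq_sub (mem_univ i), Finset.sum_erase_eq_sub (mem_univ i),
      sub_smul]
    abel
  rw [e1, smul_sub, smul_smul, inv_mul_cancel₀ hSpos.ne', one_smul]

set_option maxHeartbeats 2000000 in
theorem drift_local_lipschitz {d N : ℕ} (hN : 0 < N)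
    (f : EuclideanSpace ℝ (Fin d) → ℝ) (fbar : ℝ)
    (hglb : IsGLB (Set.range f) fbar)
    (α k Lk : ℝ) (hα : 0 < α) (hk : 0 < k)
    (hLip : ∀ x ∈ Metric.closedBall (0 : EuclideanSpace ℝ (Fin d)) k,
      ∀ y ∈ Metric.closedBall (0 : EuclideanSpace ℝ (Fin d)) k,
        |f x - f y| ≤ Lk * ‖x - y‖)
    (X Xh : Fin N → EuclideanSpace ℝ (Fin d))
    (hX : prodNorm X ≤ k) (hXh : prodNorm Xh ≤ k) (i : Fin N) :
    ‖driftFN α f X i - driftFN α f Xh i‖ ≤ ‖X i - Xh i‖ +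
      (1 + (2 * (α * Lk * Real.exp (α * sSup ((fun x => f x - fbar) ''
          Metric.closedBall (0 : EuclideanSpace ℝ (Fin d)) k))) / N) *
        Real.sqrt (N * ‖Xh i‖ ^ 2 + prodNorm Xh ^ 2)) * prodNorm (X - Xh) := by
  have hne : Nonempty (Fin N) := ⟨⟨0, hN⟩⟩
  by_cases hXeq : X = Xh
  · subst hXeq
    have h0 : prodNorm (X - X) = 0 := by simp [prodNorm]
    have h1 : prodNorm (0 : Fin N → EuclideanSpace ℝ (Fin d)) = 0 := by simp [prodNorm]
    simp [h0, h1]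
  -- setup
  set M : ℝ := sSup ((fun x => f x - fbar) '' Metric.closedBall (0 : EuclideanSpace ℝ (Fin d)) k) with hM
  set q : ℝ := Real.exp (α * M) with hq
  set ω : Fin N → ℝ := fun j => Real.exp (-α * f (X j)) with hω
  set ωh : Fin N → ℝ := fun j => Real.exp (-α * f (Xh j)) with hωh
  set S : ℝ := ∑ j, ω j with hS
  set Sh : ℝ := ∑ j, ωh j with hSh
  set n : Fin N → ℝ := fun j => ‖Xh j‖ with hn
  set Δ : Fin N → ℝ := fun j => ‖X j - Xh j‖ with hΔ
  set δ : ℝ := prodNorm (X - Xh) with hδ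
  set b : ℝ := prodNorm Xh with hb
  have hSpos : 0 < S := Finset.sum_pos (fun j _ => Real.exp_pos _) univ_nonempty
  have hShpos : 0 < Sh := Finset.sum_pos (fun j _ => Real.exp_pos _) univ_nonempty
  have hNpos : (0:ℝ) < N := Nat.cast_pos.2 hN
  -- membership in the ball
  have hXmem : ∀ j, X j ∈ Metric.closedBall (0 : EuclideanSpace ℝ (Fin d)) k := fun j =>
    mem_closedBall_zero_iff.2 ((comp_le_prodNorm X j).trans hX)
  have hXhmem : ∀ j, Xh j ∈ Metric.closedBall (0 : EuclideanSpace ℝ (Fin d)) k := fun j =>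
    mem_closedBall_zero_iff.2 ((comp_le_prodNorm Xh j).trans hXh)
  -- Lk nonneg
  have hLk : 0 ≤ Lk := by
    obtain ⟨j, hj⟩ : ∃ j, X j ≠ Xh j := by
      by_contra hcon
      push_neg at hcon
      exact hXeq (funext hcon)
    have h1 : 0 < ‖X j - Xh j‖ := norm_pos_iff.2 (sub_ne_zero.2 hj)
    have h2 := (abs_nonneg (f (X j) - f (Xh j))).trans (hLip _ (hXmem j) _ (hXhmem j))
    nlinarith
  have hβ : 0 ≤ α * Lk := mul_nonneg hα.le hLk
  -- bounds on f on the ball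
  have hfbar : ∀ x : EuclideanSpace ℝ (Fin d), fbar ≤ f x := fun x => hglb.1 (Set.mem_range_self x)
  have hMb : ∀ x ∈ Metric.closedBall (0 : EuclideanSpace ℝ (Fin d)) k, f x - fbar ≤ M := by
    intro x hx
    apply le_csSup
    · refine ⟨f 0 - fbar + Lk * k, ?_⟩
      rintro y ⟨z, hz, rfl⟩
      have h0 : (0 : EuclideanSpace ℝ (Fin d)) ∈ Metric.closedBall (0 : EuclideanSpace ℝ (Fin d)) k := by
        simp [hk.le]
      have h1 := hLip z hz 0 h0
      have h2 : ‖z - 0‖ ≤ k := by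
        simpa using mem_closedBall_zero_iff.1 hz
      have h3 : Lk * ‖z - 0‖ ≤ Lk * k := by
        exact mul_le_mul_of_nonneg_left h2 hLk
      have h4 : f z - f 0 ≤ Lk * k := (le_abs_self _).trans (h1.trans h3)
      show f z - fbar ≤ f 0 - fbar + Lk * k
      linarith
    · exact Set.mem_image_of_mem _ hx
  -- weight bounds
  have hωle : ∀ j, ω j ≤ Real.exp (-α * fbar) := by
    intro j
    apply Real.exp_le_exp.2
    have := hfbar (X j)
    nlinarith
  have hωhle : ∀ j, ωh j ≤ Real.exp (-α * fbar) := by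
    intro j
    apply Real.exp_le_exp.2
    have := hfbar (Xh j)
    nlinarith
  have hωlb : ∀ j, Real.exp (-α * (fbar + M)) ≤ ω j := by
    intro j
    apply Real.exp_le_exp.2
    have := hMb (X j) (hXmem j)
    nlinarith
  have hωhlb : ∀ j, Real.exp (-α * (fbar + M)) ≤ ωh j := by
    intro j
    apply Real.exp_le_exp.2
    have := hMb (Xh j) (hXhmem j)
    nlinarith
  have hSlb : (N:ℝ) * Real.exp (-α * (fbar + M)) ≤ S := by
    calc (N:ℝ) * Real.exp (-α * (fbar + M)) = ∑ _j : Fin N, Real.exp (-α * (fbar + M)) := by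
          simp [Finset.sum_const, nsmul_eq_mul]
      _ ≤ S := Finset.sum_le_sum fun j _ => hωlb j
  have hShlb : (N:ℝ) * Real.exp (-α * (fbar + M)) ≤ Sh := by
    calc (N:ℝ) * Real.exp (-α * (fbar + M)) = ∑ _j : Fin N, Real.exp (-α * (fbar + M)) := by
          simp [Finset.sum_const, nsmul_eq_mul]
      _ ≤ Sh := Finset.sum_le_sum fun j _ => hωhlb j
  have hkey : q * Real.exp (-α * (fbar + M)) = Real.exp (-α * fbar) := by
    rw [hq, ← Real.exp_add]
    congr 1
    ring
  have hqS : ∀ j, ω j ≤ q / N * S := by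
    intro j
    calc ω j ≤ Real.exp (-α * fbar) := hωle j
      _ = q * Real.exp (-α * (fbar + M)) := hkey.symm
      _ = q / N * ((N:ℝ) * Real.exp (-α * (fbar + M))) := by field_simp
      _ ≤ q / N * S := by
          apply mul_le_mul_of_nonneg_left hSlb
          positivity
  have hqSh : ∀ j, ωh j ≤ q / N * Sh := by
    intro j
    calc ωh j ≤ Real.exp (-α * fbar) := hωhle j
      _ = q * Real.exp (-α * (fbar + M)) := hkey.symm
      _ = q / N * ((N:ℝ) * Real.exp (-α * (fbar + M))) := by field_simp
      _ ≤ q / N * Sh := by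
          apply mul_le_mul_of_nonneg_left hShlb
          positivity
  -- nonnegativity and Cauchy-Schwarz facts
  set g : Fin N → ℝ := fun j => α * Lk * Δ j with hgdef
  have hgnn : ∀ j, 0 ≤ g j := fun j => mul_nonneg hβ (norm_nonneg _)
  have hnnn : ∀ j, 0 ≤ n j := fun j => norm_nonneg _
  have hΔnn : ∀ j, 0 ≤ Δ j := fun j => norm_nonneg _
  have hωpos : ∀ j, 0 < ω j := fun j => Real.exp_pos _
  have hωhpos : ∀ j, 0 < ωh j := fun j => Real.exp_pos _
  have hδnn : 0 ≤ δ := by rw [hδ, prodNorm]; positivity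
  have hbnn : 0 ≤ b := by rw [hb, prodNorm]; positivity
  have hδ2 : δ ^ 2 = ∑ j, Δ j ^ 2 := by
    rw [hδ, prodNorm, Real.sq_sqrt (by positivity)]
    exact Finset.sum_congr rfl fun j _ => by simp [hΔ]
  have hb2 : b ^ 2 = ∑ j, n j ^ 2 := by
    rw [hb, prodNorm, Real.sq_sqrt (by positivity)]
  have hΔle : ∀ j, Δ j ≤ δ := by
    intro j
    rw [hδ, hΔ]
    simpa using comp_le_prodNorm (X - Xh) j
  have hCS1 : ∑ j, Δ j * n j ≤ δ * b := by
    calc ∑ j, Δ j * n j ≤ Real.sqrt (∑ j, Δ j ^ 2) * Real.sqrt (∑ j, n j ^ 2) :=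
          sum_mul_le_sqrt Δ n
      _ = δ * b := by rw [← hδ2, ← hb2, Real.sqrt_sq hδnn, Real.sqrt_sq hbnn]
  set r : ℝ := q / N with hrdef
  have hrnn : 0 ≤ r := by positivity
  set sq : ℝ := Real.sqrt r with hsqdef
  have hsq : sq * sq = r := Real.mul_self_sqrt hrnn
  have hsqnn : 0 ≤ sq := Real.sqrt_nonneg _
  -- sum bounds
  have hsumsq : ∀ (u : Fin N → ℝ) (Su : ℝ), (∀ j, u j ≤ r * Su) → (∀ j, 0 < u j) →
      (∑ j, u j = Su) → Real.sqrt (∑ j, u j ^ 2) ≤ sq * Su := by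
    intro u Su hu hupos hSu
    have hSupos : 0 < Su := by rw [← hSu]; exact Finset.sum_pos (fun j _ => hupos j) univ_nonempty
    have h1 : ∑ j, u j ^ 2 ≤ r * Su * Su := by
      calc ∑ j, u j ^ 2 ≤ ∑ j, (r * Su) * u j := by
            apply Finset.sum_le_sum
            intro j _
            have h2 := hu j
            nlinarith [(hupos j).le]
        _ = r * Su * Su := by rw [← Finset.mul_sum, hSu]
    calc Real.sqrt (∑ j, u j ^ 2) ≤ Real.sqrt (r * Su * Su) := Real.sqrt_le_sqrt h1
      _ = sq * Su := by
          rw [show r * Su * Su = r * Su ^ 2 by ring, Real.sqrt_mul hrnn, Real.sqrt_sq hSupos.le,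
            hsqdef]
  have hωsq : Real.sqrt (∑ j, ω j ^ 2) ≤ sq * S :=
    hsumsq ω S (fun j => hqS j) hωpos rfl
  have hωhsq : Real.sqrt (∑ j, ωh j ^ 2) ≤ sq * Sh :=
    hsumsq ωh Sh (fun j => hqSh j) hωhpos rfl
  have hB1 : ∑ j, g j * ω j ≤ α * Lk * δ * (sq * S) := by
    calc ∑ j, g j * ω j = α * Lk * ∑ j, Δ j * ω j := by
          rw [Finset.mul_sum]; exact Finset.sum_congr rfl fun j _ => by first | ring | (rw [hgdef]; ring) | (simp only [hgdef]; ring)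
      _ ≤ α * Lk * (Real.sqrt (∑ j, Δ j ^ 2) * Real.sqrt (∑ j, ω j ^ 2)) :=
          mul_le_mul_of_nonneg_left (sum_mul_le_sqrt Δ ω) hβ
      _ = α * Lk * (δ * Real.sqrt (∑ j, ω j ^ 2)) := by rw [← hδ2, Real.sqrt_sq hδnn]
      _ ≤ α * Lk * (δ * (sq * S)) :=
          mul_le_mul_of_nonneg_left (mul_le_mul_of_nonneg_left hωsq hδnn) hβ
      _ = α * Lk * δ * (sq * S) := by ring
  have hB3 : ∑ j, g j * ωh j ≤ α * Lk * δ * (sq * Sh) := by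
    calc ∑ j, g j * ωh j = α * Lk * ∑ j, Δ j * ωh j := by
          rw [Finset.mul_sum]; exact Finset.sum_congr rfl fun j _ => by first | ring | (rw [hgdef]; ring) | (simp only [hgdef]; ring)
      _ ≤ α * Lk * (Real.sqrt (∑ j, Δ j ^ 2) * Real.sqrt (∑ j, ωh j ^ 2)) :=
          mul_le_mul_of_nonneg_left (sum_mul_le_sqrt Δ ωh) hβ
      _ = α * Lk * (δ * Real.sqrt (∑ j, ωh j ^ 2)) := by rw [← hδ2, Real.sqrt_sq hδnn]
      _ ≤ α * Lk * (δ * (sq * Sh)) :=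
          mul_le_mul_of_nonneg_left (mul_le_mul_of_nonneg_left hωhsq hδnn) hβ
      _ = α * Lk * δ * (sq * Sh) := by ring
  have hB4 : ∑ j, n j * ω j ≤ b * (sq * S) := by
    calc ∑ j, n j * ω j ≤ Real.sqrt (∑ j, n j ^ 2) * Real.sqrt (∑ j, ω j ^ 2) :=
          sum_mul_le_sqrt n ω
      _ = b * Real.sqrt (∑ j, ω j ^ 2) := by rw [← hb2, Real.sqrt_sq hbnn]
      _ ≤ b * (sq * S) := mul_le_mul_of_nonneg_left hωsq hbnn
  have hB2 : ∑ j, n j * ωh j ≤ b * (sq * Sh) := by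
    calc ∑ j, n j * ωh j ≤ Real.sqrt (∑ j, n j ^ 2) * Real.sqrt (∑ j, ωh j ^ 2) :=
          sum_mul_le_sqrt n ωh
      _ = b * Real.sqrt (∑ j, ωh j ^ 2) := by rw [← hb2, Real.sqrt_sq hbnn]
      _ ≤ b * (sq * Sh) := mul_le_mul_of_nonneg_left hωhsq hbnn
  have hA1 : ∑ j, g j * n j * ω j ≤ α * Lk * r * δ * b * S := by
    calc ∑ j, g j * n j * ω j ≤ ∑ j, g j * n j * (r * S) := by
          apply Finset.sum_le_sum
          intro j _
          exact mul_le_mul_of_nonneg_left (hqS j) (mul_nonneg (hgnn j) (hnnn j))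
      _ = (∑ j, g j * n j) * (r * S) := (Finset.sum_mul _ _ _).symm
      _ = r * S * (α * Lk * ∑ j, Δ j * n j) := by
          have hgn : ∑ j, g j * n j = α * Lk * ∑ j, Δ j * n j := by
            rw [Finset.mul_sum]
            exact Finset.sum_congr rfl fun j _ => by
              first | ring | (simp only [hgdef]; ring)
          rw [hgn]; ring
      _ ≤ r * S * (α * Lk * (δ * b)) := by
          apply mul_le_mul_of_nonneg_left (mul_le_mul_of_nonneg_left hCS1 hβ)
          positivity
      _ = α * Lk * r * δ * b * S := by ring
  have hA2 : ∑ j, g j * n j * ωh j ≤ α * Lk * r * δ * b * Sh := by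
    calc ∑ j, g j * n j * ωh j ≤ ∑ j, g j * n j * (r * Sh) := by
          apply Finset.sum_le_sum
          intro j _
          exact mul_le_mul_of_nonneg_left (hqSh j) (mul_nonneg (hgnn j) (hnnn j))
      _ = (∑ j, g j * n j) * (r * Sh) := (Finset.sum_mul _ _ _).symm
      _ = r * Sh * (α * Lk * ∑ j, Δ j * n j) := by
          have hgn : ∑ j, g j * n j = α * Lk * ∑ j, Δ j * n j := by
            rw [Finset.mul_sum]
            exact Finset.sum_congr rfl fun j _ => by
              first | ring | (simp only [hgdef]; ring)
          rw [hgn]; ring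
      _ ≤ r * Sh * (α * Lk * (δ * b)) := by
          apply mul_le_mul_of_nonneg_left (mul_le_mul_of_nonneg_left hCS1 hβ)
          positivity
      _ = α * Lk * r * δ * b * Sh := by ring
  -- pointwise Hermite-Hadamard bound
  have hpoint : ∀ j l, |ω j * ωh l - ωh j * ω l| ≤
      (g j + g l) * (ωh j * ω l + ω j * ωh l) / 2 := by
    intro j l
    have e1 : ω j * ωh l = Real.exp ((-α * f (X j)) + (-α * f (Xh l))) := (Real.exp_add _ _).symm
    have e2 : ωh j * ω l = Real.exp ((-α * f (Xh j)) + (-α * f (X l))) := (Real.exp_add _ _).symm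
    rw [e1, e2]
    refine (abs_exp_sub_exp_le ((-α * f (Xh j)) + (-α * f (X l)))
      ((-α * f (X j)) + (-α * f (Xh l)))).trans ?_
    have hyx : |((-α * f (X j)) + (-α * f (Xh l))) - ((-α * f (Xh j)) + (-α * f (X l)))|
        ≤ g j + g l := by
      have d1 : |f (X j) - f (Xh j)| ≤ Lk * Δ j := by
        rw [hΔ]; exact hLip _ (hXmem j) _ (hXhmem j)
      have d2 : |f (X l) - f (Xh l)| ≤ Lk * Δ l := by
        rw [hΔ]; exact hLip _ (hXmem l) _ (hXhmem l)
      rw [show ((-α * f (X j)) + (-α * f (Xh l))) - ((-α * f (Xh j)) + (-α * f (X l)))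
          = (-α) * ((f (X j) - f (Xh j)) - (f (X l) - f (Xh l))) from by ring, abs_mul,
        abs_neg, abs_of_pos hα]
      calc α * |(f (X j) - f (Xh j)) - (f (X l) - f (Xh l))|
          ≤ α * (|f (X j) - f (Xh j)| + |f (X l) - f (Xh l)|) :=
            mul_le_mul_of_nonneg_left (abs_sub _ _) hα.le
        _ ≤ α * (Lk * Δ j + Lk * Δ l) :=
            mul_le_mul_of_nonneg_left (add_le_add d1 d2) hα.le
        _ = g j + g l := by first | ring | (rw [hgdef]; ring) | (simp only [hgdef]; ring)
    have hpos : 0 ≤ Real.exp ((-α * f (Xh j)) + (-α * f (X l)))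
        + Real.exp ((-α * f (X j)) + (-α * f (Xh l))) := by positivity
    calc |(-α * f (X j)) + (-α * f (Xh l)) - ((-α * f (Xh j)) + (-α * f (X l)))|
          * (Real.exp ((-α * f (Xh j)) + (-α * f (X l)))
            + Real.exp ((-α * f (X j)) + (-α * f (Xh l)))) / 2
        ≤ (g j + g l) * (Real.exp ((-α * f (Xh j)) + (-α * f (X l)))
            + Real.exp ((-α * f (X j)) + (-α * f (Xh l)))) / 2 := by
          apply div_le_div_of_nonneg_right _ (by norm_num)
          exact mul_le_mul_of_nonneg_right hyx hpos
      _ = (g j + g l) * (Real.exp ((-α * f (Xh j)) + (-α * f (X l)))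
            + Real.exp ((-α * f (X j)) + (-α * f (Xh l)))) / 2 := rfl
  -- antisymmetrized vector sum
  set a2 : Fin N → Fin N → ℝ := fun j l => ω j * ωh l - ωh j * ω l with ha2
  set V : EuclideanSpace ℝ (Fin d) := ∑ j, (∑ l, a2 j l) • Xh j with hV
  have hTvec : ∑ j, (ω j / S - ωh j / Sh) • Xh j = (S * Sh)⁻¹ • V := by
    rw [hV, Finset.smul_sum]
    apply Finset.sum_congr rfl
    intro j _
    rw [smul_smul]
    congr 1
    have e3 : ∑ l, a2 j l = ω j * Sh - ωh j * S := by
      rw [show (∑ l, a2 j l) = ∑ l, (ω j * ωh l - ωh j * ω l) from rfl,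
        Finset.sum_sub_distrib, ← Finset.mul_sum, ← Finset.mul_sum, ← hS, ← hSh]
    rw [e3]
    field_simp
  have h2V : (2:ℝ) • V = ∑ j, ∑ l, a2 j l • (Xh j - Xh l) := by
    have step1 : ∑ j, ∑ l, a2 j l • (Xh j - Xh l)
        = (∑ j, ∑ l, a2 j l • Xh j) - ∑ j, ∑ l, a2 j l • Xh l := by
      rw [← Finset.sum_sub_distrib]
      apply Finset.sum_congr rfl
      intro j _
      rw [← Finset.sum_sub_distrib]
      exact Finset.sum_congr rfl fun l _ => smul_sub _ _ _
    have step2 : (∑ j, ∑ l, a2 j l • Xh j) = V := by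
      rw [hV]
      exact Finset.sum_congr rfl fun j _ => (Finset.sum_smul).symm
    have step3 : (∑ j, ∑ l, a2 j l • Xh l) = -V := by
      rw [Finset.sum_comm, hV, ← Finset.sum_neg_distrib]
      apply Finset.sum_congr rfl
      intro l _
      rw [← Finset.sum_smul, ← neg_smul]
      congr 1
      rw [← Finset.sum_neg_distrib]
      exact Finset.sum_congr rfl fun j _ => by rw [ha2]; ring
    rw [step1, step2, step3, two_smul]
    abel
  have hVnorm : 2 * ‖V‖ ≤ ∑ j, ∑ l, (g j + g l) * (ωh j * ω l + ω j * ωh l) / 2 * (n j + n l) := by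
    calc 2 * ‖V‖ = ‖(2:ℝ) • V‖ := by
          rw [norm_smul]; simp
      _ = ‖∑ j, ∑ l, a2 j l • (Xh j - Xh l)‖ := by rw [h2V]
      _ ≤ ∑ j, ‖∑ l, a2 j l • (Xh j - Xh l)‖ := norm_sum_le _ _
      _ ≤ ∑ j, ∑ l, ‖a2 j l • (Xh j - Xh l)‖ :=
          Finset.sum_le_sum fun j _ => norm_sum_le _ _
      _ ≤ ∑ j, ∑ l, (g j + g l) * (ωh j * ω l + ω j * ωh l) / 2 * (n j + n l) := by
          apply Finset.sum_le_sum
          intro j _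
          apply Finset.sum_le_sum
          intro l _
          rw [norm_smul]
          have hb1 : ‖Xh j - Xh l‖ ≤ n j + n l := norm_sub_le _ _
          have hb2' : |a2 j l| ≤ (g j + g l) * (ωh j * ω l + ω j * ωh l) / 2 := hpoint j l
          exact mul_le_mul hb2' hb1 (norm_nonneg _) (by positivity)
  have hsym : ∀ (F : Fin N → Fin N → ℝ), (∀ j l, F j l = F l j) →
      ∑ j, ∑ l, (g j + g l) * F j l = 2 * ∑ j, ∑ l, g j * F j l := by
    intro F hF
    have h1 : ∑ j, ∑ l, (g j + g l) * F j l
        = (∑ j, ∑ l, g j * F j l) + ∑ j, ∑ l, g l * F j l := by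
      rw [← Finset.sum_add_distrib]
      apply Finset.sum_congr rfl
      intro j _
      rw [← Finset.sum_add_distrib]
      exact Finset.sum_congr rfl fun l _ => by ring
    have h2 : ∑ j, ∑ l, g l * F j l = ∑ j, ∑ l, g j * F j l := by
      rw [Finset.sum_comm]
      apply Finset.sum_congr rfl
      intro j _
      apply Finset.sum_congr rfl
      intro l _
      rw [hF j l]
    rw [h1, h2]
    ring
  have hQ' : ∑ j, ∑ l, (g j + g l) * (ωh j * ω l + ω j * ωh l) / 2 * (n j + n l)
      = 2 * ∑ j, ∑ l, g j * ((ωh j * ω l + ω j * ωh l) / 2 * (n j + n l)) := by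
    have e7 : ∀ j l : Fin N, (g j + g l) * (ωh j * ω l + ω j * ωh l) / 2 * (n j + n l)
        = (g j + g l) * ((ωh j * ω l + ω j * ωh l) / 2 * (n j + n l)) := fun j l => by ring
    rw [Finset.sum_congr rfl fun j _ => Finset.sum_congr rfl fun l _ => e7 j l]
    exact hsym (fun j l => (ωh j * ω l + ω j * ωh l) / 2 * (n j + n l)) (fun j l => by ring)
  have hQ2 : ∑ j, ∑ l, g j * ((ωh j * ω l + ω j * ωh l) / 2 * (n j + n l))
      = ((∑ j, g j * n j * ωh j) * S + (∑ j, g j * n j * ω j) * Sh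
        + (∑ j, g j * ωh j) * (∑ j, n j * ω j)
        + (∑ j, g j * ω j) * (∑ j, n j * ωh j)) / 2 := by
    rw [hS, hSh]
    rw [Finset.sum_mul_sum, Finset.sum_mul_sum, Finset.sum_mul_sum, Finset.sum_mul_sum]
    rw [← Finset.sum_add_distrib, ← Finset.sum_add_distrib, ← Finset.sum_add_distrib]
    rw [Finset.sum_div]
    apply Finset.sum_congr rfl
    intro j _
    rw [← Finset.sum_add_distrib, ← Finset.sum_add_distrib, ← Finset.sum_add_distrib,
      Finset.sum_div]
    apply Finset.sum_congr rfl
    intro l _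
    ring
  have hQ : ∑ j, ∑ l, (g j + g l) * (ωh j * ω l + ω j * ωh l) / 2 * (n j + n l)
      = (∑ j, g j * n j * ωh j) * S + (∑ j, g j * n j * ω j) * Sh
        + (∑ j, g j * ωh j) * (∑ j, n j * ω j) + (∑ j, g j * ω j) * (∑ j, n j * ωh j) := by
    rw [hQ', hQ2]
    ring
  -- bound on the weight-shift term
  have hT : ‖∑ j, (ω j / S - ωh j / Sh) • Xh j‖ ≤ 2 * (α * Lk) * r * b * δ := by
    have hSSh : 0 < S * Sh := mul_pos hSpos hShpos
    have hQb : ∑ j, ∑ l, (g j + g l) * (ωh j * ω l + ω j * ωh l) / 2 * (n j + n l)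
        ≤ 4 * (α * Lk * r * δ * b) * (S * Sh) := by
      rw [hQ]
      have hB2nn : 0 ≤ ∑ j, n j * ωh j :=
        Finset.sum_nonneg fun j _ => mul_nonneg (hnnn j) (hωhpos j).le
      have hB4nn : 0 ≤ ∑ j, n j * ω j :=
        Finset.sum_nonneg fun j _ => mul_nonneg (hnnn j) (hωpos j).le
      have t1 : (∑ j, g j * n j * ωh j) * S ≤ (α * Lk * r * δ * b * Sh) * S :=
        mul_le_mul_of_nonneg_right hA2 hSpos.le
      have t2 : (∑ j, g j * n j * ω j) * Sh ≤ (α * Lk * r * δ * b * S) * Sh :=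
        mul_le_mul_of_nonneg_right hA1 hShpos.le
      have t3 : (∑ j, g j * ωh j) * (∑ j, n j * ω j)
          ≤ (α * Lk * δ * (sq * Sh)) * (b * (sq * S)) :=
        mul_le_mul hB3 hB4 hB4nn (by positivity)
      have t4 : (∑ j, g j * ω j) * (∑ j, n j * ωh j)
          ≤ (α * Lk * δ * (sq * S)) * (b * (sq * Sh)) :=
        mul_le_mul hB1 hB2 hB2nn (by positivity)
      have e4 : (α * Lk * δ * (sq * Sh)) * (b * (sq * S)) = (α * Lk * r * δ * b) * (S * Sh) := by
        rw [← hsq]; ring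
      have e5 : (α * Lk * δ * (sq * S)) * (b * (sq * Sh)) = (α * Lk * r * δ * b) * (S * Sh) := by
        rw [← hsq]; ring
      rw [e4] at t3
      rw [e5] at t4
      calc (∑ j, g j * n j * ωh j) * S + (∑ j, g j * n j * ω j) * Sh
            + (∑ j, g j * ωh j) * (∑ j, n j * ω j) + (∑ j, g j * ω j) * (∑ j, n j * ωh j)
          ≤ (α * Lk * r * δ * b * Sh) * S + (α * Lk * r * δ * b * S) * Sh
            + (α * Lk * r * δ * b) * (S * Sh) + (α * Lk * r * δ * b) * (S * Sh) :=
            add_le_add (add_le_add (add_le_add t1 t2) t3) t4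
        _ = 4 * (α * Lk * r * δ * b) * (S * Sh) := by ring
    rw [hTvec, norm_smul]
    rw [show ‖(S * Sh)⁻¹‖ = (S * Sh)⁻¹ from by
      rw [Real.norm_eq_abs, abs_of_pos (by positivity)]]
    rw [inv_mul_le_iff₀ hSSh]
    have h9 : 2 * ‖V‖ ≤ 4 * (α * Lk * r * δ * b) * (S * Sh) := hVnorm.trans hQb
    have e6 : (4:ℝ) * (α * Lk * r * δ * b) * (S * Sh)
        = 2 * (S * Sh * (2 * (α * Lk) * r * b * δ)) := by ring
    rw [e6] at h9
    linarith
  -- drift difference decomposition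
  have hd1 : driftFN α f X i = X i - S⁻¹ • ∑ j, ω j • X j := drift_eq hN α f X i
  have hd2 : driftFN α f Xh i = Xh i - Sh⁻¹ • ∑ j, ωh j • Xh j := drift_eq hN α f Xh i
  have hm1 : S⁻¹ • ∑ j, ω j • X j = ∑ j, (ω j / S) • X j := by
    rw [Finset.smul_sum]
    exact Finset.sum_congr rfl fun j _ => by rw [smul_smul, div_eq_inv_mul]
  have hm2 : Sh⁻¹ • ∑ j, ωh j • Xh j = ∑ j, (ωh j / Sh) • Xh j := by
    rw [Finset.smul_sum]
    exact Finset.sum_congr rfl fun j _ => by rw [smul_smul, div_eq_inv_mul]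
  have hdiff : driftFN α f X i - driftFN α f Xh i
      = (X i - Xh i) - ((∑ j, (ω j / S) • X j) - ∑ j, (ωh j / Sh) • Xh j) := by
    rw [hd1, hd2, hm1, hm2]
    abel
  have hsplit : (∑ j, (ω j / S) • X j) - ∑ j, (ωh j / Sh) • Xh j
      = (∑ j, (ω j / S) • (X j - Xh j)) + ∑ j, (ω j / S - ωh j / Sh) • Xh j := by
    rw [← Finset.sum_add_distrib, ← Finset.sum_sub_distrib]
    apply Finset.sum_congr rfl
    intro j _
    rw [smul_sub, sub_smul]
    abel
  have hsum1 : ‖∑ j, (ω j / S) • (X j - Xh j)‖ ≤ δ := by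
    calc ‖∑ j, (ω j / S) • (X j - Xh j)‖ ≤ ∑ j, ‖(ω j / S) • (X j - Xh j)‖ := norm_sum_le _ _
      _ = ∑ j, (ω j / S) * Δ j := Finset.sum_congr rfl fun j _ => by
          rw [norm_smul, Real.norm_eq_abs, abs_of_pos (div_pos (hωpos j) hSpos)]
      _ ≤ ∑ j, (ω j / S) * δ := Finset.sum_le_sum fun j _ =>
          mul_le_mul_of_nonneg_left (hΔle j) (div_pos (hωpos j) hSpos).le
      _ = δ := by
          rw [← Finset.sum_mul, ← Finset.sum_div, div_self hSpos.ne', one_mul]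
  have hfinal : ‖driftFN α f X i - driftFN α f Xh i‖
      ≤ ‖X i - Xh i‖ + (δ + 2 * (α * Lk) * r * b * δ) := by
    calc ‖driftFN α f X i - driftFN α f Xh i‖
        = ‖(X i - Xh i) - ((∑ j, (ω j / S) • X j) - ∑ j, (ωh j / Sh) • Xh j)‖ := by rw [hdiff]
      _ ≤ ‖X i - Xh i‖ + ‖(∑ j, (ω j / S) • X j) - ∑ j, (ωh j / Sh) • Xh j‖ := norm_sub_le _ _
      _ ≤ ‖X i - Xh i‖ + (δ + 2 * (α * Lk) * r * b * δ) := by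
          rw [hsplit]
          have := (norm_add_le (∑ j, (ω j / S) • (X j - Xh j))
            (∑ j, (ω j / S - ωh j / Sh) • Xh j))
          have h7 := add_le_add hsum1 hT
          linarith
  have hble : b ≤ Real.sqrt ((N:ℝ) * ‖Xh i‖ ^ 2 + b ^ 2) := by
    rw [show b = Real.sqrt (b ^ 2) from (Real.sqrt_sq hbnn).symm]
    apply Real.sqrt_le_sqrt
    have : (0:ℝ) ≤ (N:ℝ) * ‖Xh i‖ ^ 2 := by positivity
    nlinarith [Real.sq_sqrt (show (0:ℝ) ≤ b^2 by positivity)]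
  have hcoef : (0:ℝ) ≤ 2 * (α * Lk * q) / N := by positivity
  have h6 : 2 * (α * Lk) * r * b * δ
      ≤ 2 * (α * Lk * q) / N * Real.sqrt ((N:ℝ) * ‖Xh i‖ ^ 2 + b ^ 2) * δ := by
    have h8 := mul_le_mul_of_nonneg_left hble hcoef
    calc 2 * (α * Lk) * r * b * δ = (2 * (α * Lk * q) / N * b) * δ := by rw [hrdef]; ring
      _ ≤ (2 * (α * Lk * q) / N * Real.sqrt ((N:ℝ) * ‖Xh i‖ ^ 2 + b ^ 2)) * δ :=
          mul_le_mul_of_nonneg_right h8 hδnn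
  calc ‖driftFN α f X i - driftFN α f Xh i‖
      ≤ ‖X i - Xh i‖ + (δ + 2 * (α * Lk) * r * b * δ) := hfinal
    _ ≤ ‖X i - Xh i‖ + (δ + 2 * (α * Lk * q) / N * Real.sqrt ((N:ℝ) * ‖Xh i‖ ^ 2 + b ^ 2) * δ) := by
        linarith
    _ = ‖X i - Xh i‖ + (1 + 2 * (α * Lk * q) / N * Real.sqrt ((N:ℝ) * ‖Xh i‖ ^ 2 + b ^ 2)) * δ := by
        ring
end

section
/- Let f : ℝ^d → ℝ, α > 0, λ > 0, σ > 0 and N ∈ ℕ. Then for every X = (X¹,…,X^N) ∈ (ℝ^d)^N with Σ_j exp(−α f(X^j)) > 0, one has Σ_{i=1}^N ( −2λ X^i · F_N^i(X) + d σ² |F_N^i(X)|² ) ≤ b_N |X|², where b_N = 2(λ√N + 2 d σ² N). -/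
open Finset
open scoped RealInnerProductSpace

theorem drift_one_sided_estimate {d N : ℕ} (f : EuclideanSpace ℝ (Fin d) → ℝ)
    (α lam σ : ℝ) (hα : 0 < α) (hlam : 0 < lam) (hσ : 0 < σ)
    (X : Fin N → EuclideanSpace ℝ (Fin d))
    (hpos : 0 < ∑ j, Real.exp (-α * f (X j))) :
    ∑ i, (-2 * lam * ⟪X i, driftFN α f X i⟫ + d * σ ^ 2 * ‖driftFN α f X i‖ ^ 2) ≤
      2 * (lam * Real.sqrt N + 2 * d * σ ^ 2 * N) * prodNorm X ^ 2 := by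
  set S : ℝ := ∑ j, Real.exp (-α * f (X j)) with hS
  set R : ℝ := prodNorm X with hRdef
  have hR0 : 0 ≤ R := Real.sqrt_nonneg _
  have hR2 : R ^ 2 = ∑ j, ‖X j‖ ^ 2 :=
    Real.sq_sqrt (Finset.sum_nonneg fun j _ => sq_nonneg _)
  have hXk : ∀ k, ‖X k‖ ≤ R := by
    intro k
    have h1 : ‖X k‖ ^ 2 ≤ ∑ j, ‖X j‖ ^ 2 :=
      Finset.single_le_sum (f := fun j => ‖X j‖ ^ 2) (fun j _ => sq_nonneg _)
        (Finset.mem_univ k)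
    have := Real.sqrt_le_sqrt h1
    rwa [Real.sqrt_sq (norm_nonneg _)] at this
  have hω : ∀ j : Fin N, 0 < Real.exp (-α * f (X j)) := fun j => Real.exp_pos _
  have hωS : ∀ i : Fin N,
      ∑ j ∈ Finset.univ.erase i, Real.exp (-α * f (X j)) ≤ S := by
    intro i
    exact Finset.sum_le_sum_of_subset_of_nonneg (Finset.erase_subset _ _)
      (fun j _ _ => (hω j).le)
  -- norm bound
  have hnorm : ∀ i, ‖driftFN α f X i‖ ≤ 2 * R := by
    intro i
    rw [driftFN, norm_smul]
    have h1 : ‖∑ j ∈ Finset.univ.erase i, Real.exp (-α * f (X j)) • (X i - X j)‖ ≤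
        S * (2 * R) := by
      calc ‖∑ j ∈ Finset.univ.erase i, Real.exp (-α * f (X j)) • (X i - X j)‖
          ≤ ∑ j ∈ Finset.univ.erase i, ‖Real.exp (-α * f (X j)) • (X i - X j)‖ :=
            norm_sum_le _ _
        _ ≤ ∑ j ∈ Finset.univ.erase i, Real.exp (-α * f (X j)) * (2 * R) := by
            apply Finset.sum_le_sum
            intro j _
            rw [norm_smul, Real.norm_eq_abs, abs_of_pos (hω j)]
            have : ‖X i - X j‖ ≤ 2 * R := by
              calc ‖X i - X j‖ ≤ ‖X i‖ + ‖X j‖ := norm_sub_le _ _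
                _ ≤ R + R := add_le_add (hXk i) (hXk j)
                _ = 2 * R := by ring
            exact mul_le_mul_of_nonneg_left this (hω j).le
        _ = (∑ j ∈ Finset.univ.erase i, Real.exp (-α * f (X j))) * (2 * R) := by
            rw [Finset.sum_mul]
        _ ≤ S * (2 * R) := by
            apply mul_le_mul_of_nonneg_right (hωS i) (by positivity)
    calc ‖S⁻¹‖ * ‖∑ j ∈ Finset.univ.erase i, Real.exp (-α * f (X j)) • (X i - X j)‖
        ≤ S⁻¹ * (S * (2 * R)) := by
          rw [Real.norm_eq_abs, abs_of_pos (inv_pos.mpr hpos)]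
          exact mul_le_mul_of_nonneg_left h1 (inv_pos.mpr hpos).le
      _ = 2 * R := by field_simp
  -- inner product bound
  have hinner : ∀ i, -⟪X i, driftFN α f X i⟫ ≤ ‖X i‖ * R := by
    intro i
    rw [driftFN, real_inner_smul_right, inner_sum]
    have h2 : ∀ j ∈ Finset.univ.erase i,
        -(⟪X i, Real.exp (-α * f (X j)) • (X i - X j)⟫) ≤
          Real.exp (-α * f (X j)) * (‖X i‖ * R) := by
      intro j _
      rw [real_inner_smul_right, inner_sub_right, real_inner_self_eq_norm_sq]
      have h3 : ⟪X i, X j⟫ ≤ ‖X i‖ * R := by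
        calc ⟪X i, X j⟫ ≤ ‖X i‖ * ‖X j‖ := real_inner_le_norm _ _
          _ ≤ ‖X i‖ * R := mul_le_mul_of_nonneg_left (hXk j) (norm_nonneg _)
      nlinarith [hω j, sq_nonneg ‖X i‖, (hω j).le]
    calc -(S⁻¹ * ∑ j ∈ Finset.univ.erase i, ⟪X i, Real.exp (-α * f (X j)) • (X i - X j)⟫)
        = S⁻¹ * ∑ j ∈ Finset.univ.erase i,
            -(⟪X i, Real.exp (-α * f (X j)) • (X i - X j)⟫) := by
          rw [Finset.sum_neg_distrib, mul_neg]
      _ ≤ S⁻¹ * ∑ j ∈ Finset.univ.erase i, Real.exp (-α * f (X j)) * (‖X i‖ * R) := by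
          apply mul_le_mul_of_nonneg_left (Finset.sum_le_sum h2) (inv_pos.mpr hpos).le
      _ = S⁻¹ * ((∑ j ∈ Finset.univ.erase i, Real.exp (-α * f (X j))) * (‖X i‖ * R)) := by
          rw [Finset.sum_mul]
      _ ≤ S⁻¹ * (S * (‖X i‖ * R)) := by
          apply mul_le_mul_of_nonneg_left _ (inv_pos.mpr hpos).le
          exact mul_le_mul_of_nonneg_right (hωS i) (by positivity)
      _ = ‖X i‖ * R := by field_simp
  -- Cauchy-Schwarz for the sum of norms
  have hCS : ∑ i, ‖X i‖ ≤ Real.sqrt N * R := by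
    have h4 : (∑ i : Fin N, (1:ℝ) * ‖X i‖) ^ 2 ≤
        (∑ i : Fin N, (1:ℝ) ^ 2) * ∑ i : Fin N, ‖X i‖ ^ 2 :=
      Finset.sum_mul_sq_le_sq_mul_sq _ _ _
    simp only [one_mul, one_pow, Finset.sum_const, Finset.card_univ,
      Fintype.card_fin, nsmul_eq_mul, mul_one] at h4
    have h5 : (∑ i, ‖X i‖) ^ 2 ≤ (Real.sqrt N * R) ^ 2 := by
      rw [mul_pow, Real.sq_sqrt (Nat.cast_nonneg N), hR2]
      exact h4
    have h6 : 0 ≤ ∑ i, ‖X i‖ := Finset.sum_nonneg fun i _ => norm_nonneg _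
    exact (pow_le_pow_iff_left₀ h6 (by positivity) two_ne_zero).mp h5
  -- combine
  have hmain : ∑ i, (-2 * lam * ⟪X i, driftFN α f X i⟫ +
      d * σ ^ 2 * ‖driftFN α f X i‖ ^ 2) ≤
      ∑ i : Fin N, (2 * lam * (‖X i‖ * R) + d * σ ^ 2 * (2 * R) ^ 2) := by
    apply Finset.sum_le_sum
    intro i _
    have h7 : ‖driftFN α f X i‖ ^ 2 ≤ (2 * R) ^ 2 :=
      pow_le_pow_left₀ (norm_nonneg _) (hnorm i) 2
    have h8 := hinner i
    nlinarith [mul_le_mul_of_nonneg_left h8 (by positivity : (0:ℝ) ≤ 2 * lam),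
      mul_le_mul_of_nonneg_left h7 (by positivity : (0:ℝ) ≤ (d:ℝ) * σ ^ 2)]
  calc ∑ i, (-2 * lam * ⟪X i, driftFN α f X i⟫ + d * σ ^ 2 * ‖driftFN α f X i‖ ^ 2)
      ≤ ∑ i : Fin N, (2 * lam * (‖X i‖ * R) + d * σ ^ 2 * (2 * R) ^ 2) := hmain
    _ = 2 * lam * R * (∑ i, ‖X i‖) + N * (d * σ ^ 2 * (2 * R) ^ 2) := by
        rw [Finset.sum_add_distrib, Finset.sum_const, Finset.card_univ,
          Fintype.card_fin, nsmul_eq_mul, Finset.mul_sum]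
        congr 1
        exact Finset.sum_congr rfl fun i _ => by ring
    _ ≤ 2 * lam * R * (Real.sqrt N * R) + N * (d * σ ^ 2 * (2 * R) ^ 2) := by
        apply add_le_add_left
        apply mul_le_mul_of_nonneg_left hCS (by positivity)
    _ = 2 * (lam * Real.sqrt N + 2 * d * σ ^ 2 * N) * R ^ 2 := by ring
end

section
/- Let f : ℝ^d → ℝ be bounded below with infimum f̲ and satisfy |f(x) − f(y)| ≤ L_f(|x|+|y|)|x−y| for all x,y, and f(x) − f̲ ≤ c_u(1+|x|²) for all x, with constants L_f, c_u > 0. Let α > 0 and K ≥ 0. Then there exists a constant c₀ > 0, depending only on α, L_f, c_u and K, such that for all Borel probability measures μ, μ̂ on ℝ^d with ∫|x|⁴ dμ ≤ K and ∫|x̂|⁴ dμ̂ ≤ K, and every coupling π of μ and μ̂ (i.e. every Borel probability measure on ℝ^d × ℝ^d with marginals μ and μ̂), one has |m_f[μ] − m_f[μ̂]| ≤ c₀ (∬ |x − x̂|² dπ(x, x̂))^{1/2}. In particular |m_f[μ] − m_f[μ̂]| ≤ c₀ W₂(μ, μ̂). -/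
open MeasureTheory
set_option maxHeartbeats 1000000

/-! ### Auxiliary elementary lemmas -/

lemma wms_exp_neg_lip {a b : ℝ} (ha : 0 ≤ a) (hb : 0 ≤ b) :
    |Real.exp (-a) - Real.exp (-b)| ≤ |a - b| := by
  wlog h : b ≤ a generalizing a b
  · rw [abs_sub_comm, abs_sub_comm a b]; exact this hb ha (le_of_not_ge h)
  · have h1 : Real.exp (-a) ≤ Real.exp (-b) := Real.exp_le_exp.mpr (by linarith)
    have h2 : Real.exp (-b) ≤ 1 := Real.exp_le_one_iff.mpr (by linarith)
    have h3 : Real.exp (-a) = Real.exp (-b) * Real.exp (b - a) := by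
      rw [← Real.exp_add]; ring_nf
    have h4 : (b - a) + 1 ≤ Real.exp (b - a) := Real.add_one_le_exp _
    have h5 : (0:ℝ) < Real.exp (-b) := Real.exp_pos _
    rw [abs_of_nonpos (by linarith), abs_of_nonneg (by linarith)]
    nlinarith

lemma wms_cont_of_quad_lip {d : ℕ} {Lf : ℝ} (f : EuclideanSpace ℝ (Fin d) → ℝ)
    (h : ∀ x y, |f x - f y| ≤ Lf * (‖x‖ + ‖y‖) * ‖x - y‖) : Continuous f := by
  rw [continuous_iff_continuousAt]
  intro x₀
  rw [ContinuousAt, tendsto_iff_dist_tendsto_zero]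
  have hb : Filter.Tendsto (fun x : EuclideanSpace ℝ (Fin d) => Lf * (‖x‖ + ‖x₀‖) * ‖x - x₀‖)
      (nhds x₀) (nhds (Lf * (‖x₀‖ + ‖x₀‖) * ‖x₀ - x₀‖)) :=
    ((continuous_const.mul (continuous_norm.add continuous_const)).mul
      ((continuous_id.sub continuous_const).norm)).tendsto x₀
  simp only [sub_self, norm_zero, mul_zero] at hb
  exact squeeze_zero (fun x => dist_nonneg) (fun x => by rw [Real.dist_eq]; exact h x x₀) hb

lemma wms_norm_le_one_add_pow4 (t : ℝ) : t ≤ 1 + t ^ 4 := by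
  nlinarith [sq_nonneg (t^2 - 1/2), sq_nonneg (t - 1/2)]

lemma wms_Hsq_bound (a b c : ℝ) (ha : 0 ≤ a) (hb : 0 ≤ b) (hc : 0 ≤ c) :
    (1 + c * ((1 + a + b) * (1 + b))) ^ 2 ≤ 2 + 54 * c ^ 2 * (1 + a ^ 4 + b ^ 4) := by
  have h1 : (1 + a + b) * (1 + b) ≤ 3 * (1 + a ^ 2 + b ^ 2) := by
    nlinarith [sq_nonneg (a - b), sq_nonneg (a - 1), sq_nonneg (b - 1)]
  have h1' : 0 ≤ (1 + a + b) * (1 + b) := by positivity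
  have h2 : ((1 + a + b) * (1 + b)) ^ 2 ≤ 9 * (1 + a ^ 2 + b ^ 2) ^ 2 := by
    nlinarith [sq_nonneg (1 + a ^ 2 + b ^ 2), h1, h1']
  have h3 : (1 + a ^ 2 + b ^ 2) ^ 2 ≤ 3 * (1 + a ^ 4 + b ^ 4) := by
    nlinarith [sq_nonneg (a ^ 2 - b ^ 2), sq_nonneg (a ^ 2 - 1), sq_nonneg (b ^ 2 - 1)]
  have h4 : (1 + c * ((1 + a + b) * (1 + b))) ^ 2
      ≤ 2 + 2 * c ^ 2 * ((1 + a + b) * (1 + b)) ^ 2 := by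
    nlinarith [sq_nonneg (1 - c * ((1 + a + b) * (1 + b)))]
  have h5 : 2 * c ^ 2 * ((1 + a + b) * (1 + b)) ^ 2 ≤ 54 * c ^ 2 * (1 + a ^ 4 + b ^ 4) := by
    have hc2 : 0 ≤ c ^ 2 := sq_nonneg c
    nlinarith [mul_le_mul_of_nonneg_left h2 hc2, mul_le_mul_of_nonneg_left h3 hc2]
  linarith

lemma wms_weight_mono (a b c t : ℝ) (ha : 0 ≤ a) (hb : 0 ≤ b) (hc : 0 ≤ c) (ht : 0 ≤ t) :
    (1 + c * ((a + b) * b)) * t ≤ (1 + c * ((1 + a + b) * (1 + b))) * t := by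
  apply mul_le_mul_of_nonneg_right _ ht
  have h : (a + b) * b ≤ (1 + a + b) * (1 + b) := by nlinarith
  nlinarith [mul_le_mul_of_nonneg_left h hc]

lemma wms_weight_mono' (a b c t : ℝ) (ha : 0 ≤ a) (hb : 0 ≤ b) (hc : 0 ≤ c) (ht : 0 ≤ t) :
    (c * (a + b)) * t ≤ (1 + c * ((1 + a + b) * (1 + b))) * t := by
  apply mul_le_mul_of_nonneg_right _ ht
  have h1 : a + b ≤ (1 + a + b) * (1 + b) := by nlinarith
  nlinarith [mul_le_mul_of_nonneg_left h1 hc]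

lemma wms_prod_le_sq_add_sq (a b : ℝ) (ha : 0 ≤ a) (hb : 0 ≤ b) : a * b ≤ a ^ 2 + b ^ 2 := by
  nlinarith [sq_nonneg (a - b)]

lemma wms_sum_sq_le (a b : ℝ) (ha : 0 ≤ a) (hb : 0 ≤ b) :
    (a + b) ^ 2 ≤ 4 + 2 * a ^ 4 + 2 * b ^ 4 := by
  nlinarith [sq_nonneg (a - b), sq_nonneg (a ^ 2 - 1), sq_nonneg (b ^ 2 - 1),
    sq_nonneg (a * b - 1), sq_nonneg (a + b), sq_nonneg (a * b)]

/-! ### Per-measure bounds -/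

lemma wms_per_measure_bounds {d : ℕ} {α cu K : ℝ} (hα : 0 < α) (hcu : 0 < cu) (hK : 0 ≤ K)
    {g : EuclideanSpace ℝ (Fin d) → ℝ} (hgc : Continuous g)
    (hg0 : ∀ x, 0 ≤ g x) (hgu : ∀ x, g x ≤ cu * (1 + ‖x‖ ^ 2))
    (μ : Measure (EuclideanSpace ℝ (Fin d))) [IsProbabilityMeasure μ]
    (hint : Integrable (fun x => ‖x‖ ^ 4) μ) (hKb : (∫ x, ‖x‖ ^ 4 ∂μ) ≤ K) :
    Integrable (fun x => Real.exp (-α * g x)) μ ∧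
    Integrable (fun x => Real.exp (-α * g x) • x) μ ∧
    Real.exp (-(α * cu * (1 + Real.sqrt (2 * K + 2)))) / 2 ≤ ∫ x, Real.exp (-α * g x) ∂μ ∧
    ‖∫ x, Real.exp (-α * g x) • x ∂μ‖ ≤ 1 + K := by
  have hωc : Continuous (fun x => Real.exp (-α * g x)) :=
    Real.continuous_exp.comp (continuous_const.mul hgc)
  have hωpos : ∀ x : EuclideanSpace ℝ (Fin d), 0 < Real.exp (-α * g x) := fun x => Real.exp_pos _
  have hωle : ∀ x : EuclideanSpace ℝ (Fin d), Real.exp (-α * g x) ≤ 1 := fun x =>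
    Real.exp_le_one_iff.mpr (by nlinarith [hg0 x])
  have I1 : Integrable (fun x => Real.exp (-α * g x)) μ := by
    refine Integrable.mono' (integrable_const 1) hωc.aestronglyMeasurable ?_
    filter_upwards with x
    rw [Real.norm_eq_abs, abs_of_nonneg (hωpos x).le]
    exact hωle x
  have hmaj : Integrable (fun x : EuclideanSpace ℝ (Fin d) => 1 + ‖x‖ ^ 4) μ :=
    (integrable_const 1).add hint
  have I2 : Integrable (fun x => Real.exp (-α * g x) • x) μ := by
    refine Integrable.mono' hmaj (hωc.smul continuous_id).aestronglyMeasurable ?_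
    filter_upwards with x
    rw [norm_smul, Real.norm_eq_abs, abs_of_nonneg (hωpos x).le]
    calc Real.exp (-α * g x) * ‖x‖ ≤ 1 * ‖x‖ :=
          mul_le_mul_of_nonneg_right (hωle x) (norm_nonneg x)
      _ = ‖x‖ := one_mul _
      _ ≤ 1 + ‖x‖ ^ 4 := wms_norm_le_one_add_pow4 _
  refine ⟨I1, I2, ?_, ?_⟩
  · set c := Real.exp (-(α * cu * (1 + Real.sqrt (2 * K + 2)))) with hc
    have hcpos : 0 < c := Real.exp_pos _
    have h2K : (0:ℝ) < 2 * K + 2 := by linarith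
    have hSnn : 0 ≤ Real.sqrt (2 * K + 2) := Real.sqrt_nonneg _
    have hlow : ∀ x : EuclideanSpace ℝ (Fin d),
        c - c / (2 * K + 2) * ‖x‖ ^ 4 ≤ Real.exp (-α * g x) := by
      intro x
      by_cases h : ‖x‖ ^ 2 ≤ Real.sqrt (2 * K + 2)
      · have h1 : -(α * cu * (1 + Real.sqrt (2 * K + 2))) ≤ -α * g x := by
          have e1 : α * g x ≤ α * (cu * (1 + ‖x‖ ^ 2)) :=
            mul_le_mul_of_nonneg_left (hgu x) hα.le
          have e2 : α * cu * ‖x‖ ^ 2 ≤ α * cu * Real.sqrt (2 * K + 2) :=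
            mul_le_mul_of_nonneg_left h (mul_pos hα hcu).le
          nlinarith
        have h2 : c ≤ Real.exp (-α * g x) := by rw [hc]; exact Real.exp_le_exp.mpr h1
        have h3 : 0 ≤ c / (2 * K + 2) * ‖x‖ ^ 4 := by positivity
        linarith
      · push_neg at h
        have h4 : 2 * K + 2 < ‖x‖ ^ 4 := by
          have := Real.sq_sqrt h2K.le
          nlinarith [Real.sqrt_nonneg (2 * K + 2), norm_nonneg x]
        have h5 : c - c / (2 * K + 2) * ‖x‖ ^ 4 ≤ 0 := by
          rw [sub_nonpos]
          calc c = c / (2 * K + 2) * (2 * K + 2) := by field_simp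
            _ ≤ c / (2 * K + 2) * ‖x‖ ^ 4 :=
                mul_le_mul_of_nonneg_left h4.le (by positivity)
        exact h5.trans (hωpos x).le
    have hlowint : Integrable (fun x : EuclideanSpace ℝ (Fin d) =>
        c - c / (2 * K + 2) * ‖x‖ ^ 4) μ := (integrable_const c).sub (hint.const_mul _)
    have hmono := integral_mono hlowint I1 hlow
    have hcomp : ∫ x : EuclideanSpace ℝ (Fin d), (c - c / (2 * K + 2) * ‖x‖ ^ 4) ∂μ
        = c - c / (2 * K + 2) * ∫ x, ‖x‖ ^ 4 ∂μ := by
      rw [integral_sub (integrable_const c) (hint.const_mul _), integral_const,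
        integral_const_mul]
      simp
    rw [hcomp] at hmono
    have hmom : 0 ≤ ∫ x, ‖x‖ ^ 4 ∂μ := integral_nonneg (fun x => by positivity)
    have hfin : c / 2 ≤ c - c / (2 * K + 2) * ∫ x, ‖x‖ ^ 4 ∂μ := by
      have h6 : c / (2 * K + 2) * ∫ x, ‖x‖ ^ 4 ∂μ ≤ c / (2 * K + 2) * K :=
        mul_le_mul_of_nonneg_left hKb (by positivity)
      have h7 : c / (2 * K + 2) * K ≤ c / 2 := by
        rw [div_mul_eq_mul_div, div_le_div_iff₀ h2K two_pos]
        nlinarith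
      linarith
    linarith
  · calc ‖∫ x, Real.exp (-α * g x) • x ∂μ‖ ≤ ∫ x, ‖Real.exp (-α * g x) • x‖ ∂μ :=
          norm_integral_le_integral_norm _
      _ ≤ ∫ x : EuclideanSpace ℝ (Fin d), (1 + ‖x‖ ^ 4) ∂μ := by
          refine integral_mono I2.norm hmaj fun x => ?_
          dsimp only
          rw [norm_smul, Real.norm_eq_abs, abs_of_nonneg (hωpos x).le]
          calc Real.exp (-α * g x) * ‖x‖ ≤ 1 * ‖x‖ :=
                mul_le_mul_of_nonneg_right (hωle x) (norm_nonneg x)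
            _ = ‖x‖ := one_mul _
            _ ≤ 1 + ‖x‖ ^ 4 := wms_norm_le_one_add_pow4 _
      _ = 1 + ∫ x, ‖x‖ ^ 4 ∂μ := by
          rw [integral_add (integrable_const 1) hint, integral_const]; simp
      _ ≤ 1 + K := by linarith

/-! ### Main theorem -/

theorem weighted_mean_stability {d : ℕ} (α Lf cu K : ℝ)
    (hα : 0 < α) (hLf : 0 < Lf) (hcu : 0 < cu) (hK : 0 ≤ K) :
    ∃ c₀ > (0 : ℝ), ∀ (f : EuclideanSpace ℝ (Fin d) → ℝ) (fbar : ℝ),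
      IsGLB (Set.range f) fbar →
      (∀ x y : EuclideanSpace ℝ (Fin d), |f x - f y| ≤ Lf * (‖x‖ + ‖y‖) * ‖x - y‖) →
      (∀ x : EuclideanSpace ℝ (Fin d), f x - fbar ≤ cu * (1 + ‖x‖ ^ 2)) →
      ∀ (μ μh : Measure (EuclideanSpace ℝ (Fin d))),
        IsProbabilityMeasure μ → IsProbabilityMeasure μh →
        Integrable (fun x => ‖x‖ ^ 4) μ → Integrable (fun x => ‖x‖ ^ 4) μh →
        (∫ x, ‖x‖ ^ 4 ∂μ) ≤ K → (∫ x, ‖x‖ ^ 4 ∂μh) ≤ K →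
        ∀ π : Measure (EuclideanSpace ℝ (Fin d) × EuclideanSpace ℝ (Fin d)),
          IsProbabilityMeasure π →
          π.map Prod.fst = μ → π.map Prod.snd = μh →
          ‖((∫ x, Real.exp (-α * f x) ∂μ)⁻¹ • ∫ x, Real.exp (-α * f x) • x ∂μ) -
            ((∫ x, Real.exp (-α * f x) ∂μh)⁻¹ • ∫ x, Real.exp (-α * f x) • x ∂μh)‖ ≤
            c₀ * Real.sqrt (∫ p, ‖p.1 - p.2‖ ^ 2 ∂π) := by
  set E := EuclideanSpace ℝ (Fin d)
  set D : ℝ := Real.exp (-(α * cu * (1 + Real.sqrt (2 * K + 2)))) / 2 with hD_def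
  set CH : ℝ := 2 + 54 * α ^ 2 * Lf ^ 2 * (1 + 2 * K) with hCH_def
  have hDpos : 0 < D := by positivity
  have hCHpos : 0 < CH := by positivity
  refine ⟨(1 / D + (1 + K) / D ^ 2) * Real.sqrt CH, by positivity, ?_⟩
  intro f fbar hglb hlip hub μ μh hμ hμh hi4 hi4h hk4 hk4h π hπ hfst hsnd
  haveI := hμ; haveI := hμh; haveI := hπ
  set g : E → ℝ := fun x => f x - fbar with hg_def
  have hg0 : ∀ x, 0 ≤ g x := fun x => sub_nonneg.mpr (hglb.1 ⟨x, rfl⟩)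
  have hfc : Continuous f := wms_cont_of_quad_lip f hlip
  have hgc : Continuous g := hfc.sub continuous_const
  set ω : E → ℝ := fun x => Real.exp (-α * g x) with hω_def
  have hωc : Continuous ω := Real.continuous_exp.comp (continuous_const.mul hgc)
  have hωpos : ∀ x, 0 < ω x := fun x => Real.exp_pos _
  have hωle : ∀ x, ω x ≤ 1 := fun x =>
    Real.exp_le_one_iff.mpr (by nlinarith [hg0 x])
  -- reduce f to g
  have hrw : ∀ (ν : Measure E),
      (∫ x, Real.exp (-α * f x) ∂ν)⁻¹ • (∫ x, Real.exp (-α * f x) • x ∂ν)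
        = (∫ x, ω x ∂ν)⁻¹ • (∫ x, ω x • x ∂ν) := by
    intro ν
    have hβ : Real.exp (-α * fbar) ≠ 0 := (Real.exp_pos _).ne'
    have hfg : ∀ x, Real.exp (-α * f x) = Real.exp (-α * fbar) * ω x := by
      intro x
      rw [hω_def]
      dsimp only
      rw [← Real.exp_add]
      congr 1
      rw [hg_def]
      ring
    simp only [hfg, mul_smul]
    rw [integral_const_mul, integral_smul]
    rcases eq_or_ne (∫ x, ω x ∂ν) 0 with hB0 | hB0
    · simp [hB0]
    · rw [mul_inv, smul_smul, mul_right_comm, inv_mul_cancel₀ hβ, one_mul]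
  rw [hrw μ, hrw μh]
  obtain ⟨I1, I2, hB, hA⟩ := wms_per_measure_bounds hα hcu hK hgc hg0 hub μ hi4 hk4
  obtain ⟨I1h, I2h, hBh, hAh⟩ := wms_per_measure_bounds hα hcu hK hgc hg0 hub μh hi4h hk4h
  have hB' : D ≤ ∫ x, ω x ∂μ := by rw [hD_def]; exact hB
  have hBh' : D ≤ ∫ x, ω x ∂μh := by rw [hD_def]; exact hBh
  have hmf : AEMeasurable (Prod.fst : E × E → E) π := measurable_fst.aemeasurable
  have hms : AEMeasurable (Prod.snd : E × E → E) π := measurable_snd.aemeasurable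
  have hn4c : Continuous (fun x : E => ‖x‖ ^ 4) := continuous_norm.pow 4
  have hωxc : Continuous (fun x : E => ω x • x) := hωc.smul continuous_id
  have hAtrans : (∫ x, ω x • x ∂μ) = ∫ p : E × E, ω p.1 • p.1 ∂π := by
    rw [← hfst, integral_map hmf (hωxc.aestronglyMeasurable)]
  have hAtransh : (∫ x, ω x • x ∂μh) = ∫ p : E × E, ω p.2 • p.2 ∂π := by
    rw [← hsnd, integral_map hms (hωxc.aestronglyMeasurable)]
  have hBtrans : (∫ x, ω x ∂μ) = ∫ p : E × E, ω p.1 ∂π := by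
    rw [← hfst, integral_map hmf (hωc.aestronglyMeasurable)]
  have hBtransh : (∫ x, ω x ∂μh) = ∫ p : E × E, ω p.2 ∂π := by
    rw [← hsnd, integral_map hms (hωc.aestronglyMeasurable)]
  have hm4 : (∫ p : E × E, ‖p.1‖ ^ 4 ∂π) = ∫ x, ‖x‖ ^ 4 ∂μ := by
    rw [← hfst, integral_map hmf (hn4c.aestronglyMeasurable)]
  have hm4h : (∫ p : E × E, ‖p.2‖ ^ 4 ∂π) = ∫ x, ‖x‖ ^ 4 ∂μh := by
    rw [← hsnd, integral_map hms (hn4c.aestronglyMeasurable)]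
  have hi4π1 : Integrable (fun p : E × E => ‖p.1‖ ^ 4) π := by
    have h := hi4; rw [← hfst] at h
    exact (integrable_map_measure hn4c.aestronglyMeasurable hmf).mp h
  have hi4π2 : Integrable (fun p : E × E => ‖p.2‖ ^ 4) π := by
    have h := hi4h; rw [← hsnd] at h
    exact (integrable_map_measure hn4c.aestronglyMeasurable hms).mp h
  have hiA1 : Integrable (fun p : E × E => ω p.1 • p.1) π := by
    have h := I2; rw [← hfst] at h
    exact (integrable_map_measure hωxc.aestronglyMeasurable hmf).mp h
  have hiA2 : Integrable (fun p : E × E => ω p.2 • p.2) π := by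
    have h := I2h; rw [← hsnd] at h
    exact (integrable_map_measure hωxc.aestronglyMeasurable hms).mp h
  have hiB1 : Integrable (fun p : E × E => ω p.1) π := by
    have h := I1; rw [← hfst] at h
    exact (integrable_map_measure hωc.aestronglyMeasurable hmf).mp h
  have hiB2 : Integrable (fun p : E × E => ω p.2) π := by
    have h := I1h; rw [← hsnd] at h
    exact (integrable_map_measure hωc.aestronglyMeasurable hms).mp h
  set H : E × E → ℝ := fun p => 1 + α * Lf * ((1 + ‖p.1‖ + ‖p.2‖) * (1 + ‖p.2‖)) with hH_def
  set w : E × E → ℝ := fun p => ‖p.1 - p.2‖ with hw_def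
  have hHc : Continuous H := by
    apply continuous_const.add
    exact continuous_const.mul (((continuous_const.add continuous_fst.norm).add
      continuous_snd.norm).mul (continuous_const.add continuous_snd.norm))
  have hwc : Continuous w := (continuous_fst.sub continuous_snd).norm
  have hαLf : 0 < α * Lf := mul_pos hα hLf
  have hH0 : ∀ p, 0 ≤ H p := by
    intro p
    rw [hH_def]
    dsimp only
    have h1 : 0 ≤ (1 + ‖p.1‖ + ‖p.2‖) * (1 + ‖p.2‖) := by positivity
    nlinarith
  have hw0 : ∀ p, 0 ≤ w p := fun p => norm_nonneg _
  have hHsq : ∀ p : E × E, H p ^ 2 ≤ 2 + 54 * α ^ 2 * Lf ^ 2 * (1 + ‖p.1‖ ^ 4 + ‖p.2‖ ^ 4) := by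
    intro p
    have h := wms_Hsq_bound ‖p.1‖ ‖p.2‖ (α * Lf) (norm_nonneg _) (norm_nonneg _) hαLf.le
    calc H p ^ 2 = (1 + α * Lf * ((1 + ‖p.1‖ + ‖p.2‖) * (1 + ‖p.2‖))) ^ 2 := by rw [hH_def]
      _ ≤ 2 + 54 * (α * Lf) ^ 2 * (1 + ‖p.1‖ ^ 4 + ‖p.2‖ ^ 4) := h
      _ = 2 + 54 * α ^ 2 * Lf ^ 2 * (1 + ‖p.1‖ ^ 4 + ‖p.2‖ ^ 4) := by ring
  -- Lipschitz bound for ω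
  have hωlip : ∀ x y : E, |ω x - ω y| ≤ α * Lf * (‖x‖ + ‖y‖) * ‖x - y‖ := by
    intro x y
    have e1 : ω x = Real.exp (-(α * g x)) := by rw [hω_def]; dsimp only; rw [neg_mul]
    have e2 : ω y = Real.exp (-(α * g y)) := by rw [hω_def]; dsimp only; rw [neg_mul]
    have h1 : |ω x - ω y| ≤ |α * g x - α * g y| := by
      rw [e1, e2]
      exact wms_exp_neg_lip (mul_nonneg hα.le (hg0 x)) (mul_nonneg hα.le (hg0 y))
    have h2 : |α * g x - α * g y| = α * |f x - f y| := by
      rw [← mul_sub, abs_mul, abs_of_pos hα]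
      congr 1
      show |g x - g y| = |f x - f y|
      rw [hg_def]
      dsimp only
      rw [sub_sub_sub_cancel_right]
    calc |ω x - ω y| ≤ α * |f x - f y| := by rw [← h2]; exact h1
      _ ≤ α * (Lf * (‖x‖ + ‖y‖) * ‖x - y‖) := mul_le_mul_of_nonneg_left (hlip x y) hα.le
      _ = α * Lf * (‖x‖ + ‖y‖) * ‖x - y‖ := by ring
  have hkeyA : ∀ p : E × E, ‖ω p.1 • p.1 - ω p.2 • p.2‖ ≤ H p * w p := by
    rintro ⟨x, y⟩
    have hd : ω x • x - ω y • y = ω x • (x - y) + (ω x - ω y) • y := by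
      rw [smul_sub, sub_smul]; abel
    calc ‖ω x • x - ω y • y‖ ≤ ‖ω x • (x - y)‖ + ‖(ω x - ω y) • y‖ := by
          rw [hd]; exact norm_add_le _ _
      _ = ω x * ‖x - y‖ + |ω x - ω y| * ‖y‖ := by
          rw [norm_smul, norm_smul, Real.norm_eq_abs, Real.norm_eq_abs, abs_of_pos (hωpos x)]
      _ ≤ 1 * ‖x - y‖ + (α * Lf * (‖x‖ + ‖y‖) * ‖x - y‖) * ‖y‖ :=
          add_le_add (mul_le_mul_of_nonneg_right (hωle x) (norm_nonneg _))
            (mul_le_mul_of_nonneg_right (hωlip x y) (norm_nonneg _))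
      _ = (1 + α * Lf * ((‖x‖ + ‖y‖) * ‖y‖)) * ‖x - y‖ := by ring
      _ ≤ (1 + α * Lf * ((1 + ‖x‖ + ‖y‖) * (1 + ‖y‖))) * ‖x - y‖ :=
          wms_weight_mono ‖x‖ ‖y‖ (α * Lf) ‖x - y‖ (norm_nonneg _) (norm_nonneg _)
            hαLf.le (norm_nonneg _)
      _ = H (x, y) * w (x, y) := by rw [hH_def, hw_def]
  have hkeyB : ∀ p : E × E, |ω p.1 - ω p.2| ≤ H p * w p := by
    rintro ⟨x, y⟩
    calc |ω x - ω y| ≤ α * Lf * (‖x‖ + ‖y‖) * ‖x - y‖ := hωlip x y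
      _ = (α * Lf * (‖x‖ + ‖y‖)) * ‖x - y‖ := by ring
      _ ≤ (1 + α * Lf * ((1 + ‖x‖ + ‖y‖) * (1 + ‖y‖))) * ‖x - y‖ :=
          wms_weight_mono' ‖x‖ ‖y‖ (α * Lf) ‖x - y‖ (norm_nonneg _) (norm_nonneg _)
            hαLf.le (norm_nonneg _)
      _ = H (x, y) * w (x, y) := by rw [hH_def, hw_def]
  -- integrability on π
  have hbase : Integrable (fun p : E × E => 1 + ‖p.1‖ ^ 4 + ‖p.2‖ ^ 4) π :=
    ((integrable_const 1).add hi4π1).add hi4π2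
  have hiMaj : Integrable (fun p : E × E =>
      2 + 54 * α ^ 2 * Lf ^ 2 * (1 + ‖p.1‖ ^ 4 + ‖p.2‖ ^ 4)) π :=
    (integrable_const 2).add (hbase.const_mul _)
  have hiH2 : Integrable (fun p => H p ^ 2) π := by
    refine Integrable.mono' hiMaj (hHc.pow 2).aestronglyMeasurable ?_
    filter_upwards with p
    rw [Real.norm_eq_abs, abs_of_nonneg (sq_nonneg _)]
    exact hHsq p
  have hwsq : ∀ p : E × E, w p ^ 2 ≤ 4 + 2 * ‖p.1‖ ^ 4 + 2 * ‖p.2‖ ^ 4 := by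
    intro p
    have h1 : w p ≤ ‖p.1‖ + ‖p.2‖ := norm_sub_le _ _
    have h2 : w p ^ 2 ≤ (‖p.1‖ + ‖p.2‖) ^ 2 := by
      apply pow_le_pow_left₀ (hw0 p) h1
    exact h2.trans (wms_sum_sq_le _ _ (norm_nonneg _) (norm_nonneg _))
  have hiMaj2 : Integrable (fun p : E × E => 4 + 2 * ‖p.1‖ ^ 4 + 2 * ‖p.2‖ ^ 4) π :=
    ((integrable_const 4).add (hi4π1.const_mul 2)).add (hi4π2.const_mul 2)
  have hiw2 : Integrable (fun p => w p ^ 2) π := by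
    refine Integrable.mono' hiMaj2 (hwc.pow 2).aestronglyMeasurable ?_
    filter_upwards with p
    rw [Real.norm_eq_abs, abs_of_nonneg (sq_nonneg _)]
    exact hwsq p
  have hiHw : Integrable (fun p => H p * w p) π := by
    refine Integrable.mono' (hiH2.add hiw2) (hHc.mul hwc).aestronglyMeasurable ?_
    filter_upwards with p
    rw [Real.norm_eq_abs, abs_of_nonneg (mul_nonneg (hH0 p) (hw0 p))]
    exact wms_prod_le_sq_add_sq _ _ (hH0 p) (hw0 p)
  -- Cauchy-Schwarz
  have h2e : ENNReal.ofReal (2:ℝ) = 2 := by norm_num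
  have hMH : MemLp H (ENNReal.ofReal (2:ℝ)) π := by
    rw [h2e]
    exact (memLp_two_iff_integrable_sq hHc.aestronglyMeasurable).mpr hiH2
  have hMw : MemLp w (ENNReal.ofReal (2:ℝ)) π := by
    rw [h2e]
    exact (memLp_two_iff_integrable_sq hwc.aestronglyMeasurable).mpr hiw2
  have hconj : Real.HolderConjugate 2 2 := ⟨by norm_num, by norm_num, by norm_num⟩
  have hCS := integral_mul_le_Lp_mul_Lq_of_nonneg hconj
    (Filter.Eventually.of_forall hH0) (Filter.Eventually.of_forall hw0) hMH hMw
  have hr2 : ∀ t : ℝ, t ^ (2:ℝ) = t ^ 2 := fun t => by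
    rw [show (2:ℝ) = ((2:ℕ):ℝ) by norm_num, Real.rpow_natCast]
  simp only [hr2] at hCS
  rw [← Real.sqrt_eq_rpow, ← Real.sqrt_eq_rpow] at hCS
  -- bound on ∫ H²
  have hH2int : (∫ p, H p ^ 2 ∂π) ≤ CH := by
    have step := integral_mono hiH2 hiMaj hHsq
    have hcomp : ∫ p : E × E, (2 + 54 * α ^ 2 * Lf ^ 2 * (1 + ‖p.1‖ ^ 4 + ‖p.2‖ ^ 4)) ∂π
        = 2 + 54 * α ^ 2 * Lf ^ 2 *
            (1 + (∫ x, ‖x‖ ^ 4 ∂μ) + ∫ x, ‖x‖ ^ 4 ∂μh) := by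
      have hi1 : Integrable (fun p : E × E => 1 + ‖p.1‖ ^ 4) π :=
        (integrable_const 1).add hi4π1
      rw [integral_add (integrable_const 2) (hbase.const_mul _), integral_const,
        integral_const_mul, integral_add hi1 hi4π2,
        integral_add (integrable_const 1) hi4π1, integral_const, hm4, hm4h]
      simp
    rw [hcomp] at step
    have hmom1 : 0 ≤ ∫ x, ‖x‖ ^ 4 ∂μ := integral_nonneg fun x => by positivity
    have hmom2 : 0 ≤ ∫ x, ‖x‖ ^ 4 ∂μh := integral_nonneg fun x => by positivity
    have : 54 * α ^ 2 * Lf ^ 2 * (1 + (∫ x, ‖x‖ ^ 4 ∂μ) + ∫ x, ‖x‖ ^ 4 ∂μh)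
        ≤ 54 * α ^ 2 * Lf ^ 2 * (1 + 2 * K) := by
      apply mul_le_mul_of_nonneg_left _ (by positivity)
      linarith
    rw [hCH_def]
    linarith
  set W := Real.sqrt (∫ p : E × E, ‖p.1 - p.2‖ ^ 2 ∂π) with hW_def
  have hW0 : 0 ≤ W := Real.sqrt_nonneg _
  have hwW : Real.sqrt (∫ p, w p ^ 2 ∂π) = W := by simp only [hw_def, hW_def]; rfl
  set T := ∫ p, H p * w p ∂π with hT_def
  have hT0 : 0 ≤ T := integral_nonneg fun p => mul_nonneg (hH0 p) (hw0 p)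
  have hTle : T ≤ Real.sqrt CH * W := by
    rw [hT_def]
    refine hCS.trans ?_
    exact mul_le_mul_of_nonneg_right (Real.sqrt_le_sqrt hH2int) hW0
  -- difference bounds
  have hTA : ‖(∫ x, ω x • x ∂μ) - ∫ x, ω x • x ∂μh‖ ≤ T := by
    rw [hAtrans, hAtransh, ← integral_sub hiA1 hiA2, hT_def]
    exact norm_integral_le_of_norm_le hiHw (Filter.Eventually.of_forall hkeyA)
  have hTB : |(∫ x, ω x ∂μ) - ∫ x, ω x ∂μh| ≤ T := by
    rw [hBtrans, hBtransh, ← integral_sub hiB1 hiB2, hT_def]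
    rw [← Real.norm_eq_abs]
    refine norm_integral_le_of_norm_le hiHw (Filter.Eventually.of_forall ?_)
    intro p
    rw [Real.norm_eq_abs]
    exact hkeyB p
  -- final algebra
  set B1 := ∫ x, ω x ∂μ with hB1_def
  set B2 := ∫ x, ω x ∂μh with hB2_def
  set A1 := ∫ x, ω x • x ∂μ with hA1_def
  set A2 := ∫ x, ω x • x ∂μh with hA2_def
  have hB1pos : 0 < B1 := lt_of_lt_of_le hDpos hB'
  have hB2pos : 0 < B2 := lt_of_lt_of_le hDpos hBh'
  have split : B1⁻¹ • A1 - B2⁻¹ • A2 = B1⁻¹ • (A1 - A2) + (B1⁻¹ - B2⁻¹) • A2 := by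
    rw [smul_sub, sub_smul]; abel
  have hinv : |B1⁻¹ - B2⁻¹| ≤ T / D ^ 2 := by
    have e : B1⁻¹ - B2⁻¹ = (B2 - B1) / (B1 * B2) := by
      field_simp
    rw [e, abs_div, abs_of_pos (mul_pos hB1pos hB2pos)]
    refine div_le_div₀ hT0 ?_ (by positivity) ?_
    · rw [abs_sub_comm]; exact hTB
    · nlinarith
  calc ‖B1⁻¹ • A1 - B2⁻¹ • A2‖
      ≤ ‖B1⁻¹ • (A1 - A2)‖ + ‖(B1⁻¹ - B2⁻¹) • A2‖ := by
        rw [split]; exact norm_add_le _ _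
    _ = B1⁻¹ * ‖A1 - A2‖ + |B1⁻¹ - B2⁻¹| * ‖A2‖ := by
        rw [norm_smul, norm_smul, Real.norm_eq_abs, Real.norm_eq_abs,
          abs_of_pos (inv_pos.mpr hB1pos)]
    _ ≤ D⁻¹ * T + (T / D ^ 2) * (1 + K) := by
        refine add_le_add ?_ ?_
        · exact mul_le_mul (inv_anti₀ hDpos hB') hTA (norm_nonneg _)
            (inv_nonneg.mpr hDpos.le)
        · exact mul_le_mul hinv hAh (norm_nonneg _) (by positivity)
    _ ≤ D⁻¹ * (Real.sqrt CH * W) + ((Real.sqrt CH * W) / D ^ 2) * (1 + K) := by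
        refine add_le_add ?_ ?_
        · exact mul_le_mul_of_nonneg_left hTle (inv_nonneg.mpr hDpos.le)
        · exact mul_le_mul_of_nonneg_right
            (div_le_div_of_nonneg_right hTle (by positivity)) (by linarith)
    _ = (1 / D + (1 + K) / D ^ 2) * Real.sqrt CH * W := by
        field_simp
end

section
/- Let f : ℝ^d → ℝ be measurable and bounded below with infimum f* = f̲, satisfying the upper growth bound f(x) − f* ≤ c_u(1 + |x|²) for all x ∈ ℝ^d and the lower quadratic growth f(x) − f* ≥ c_l |x|² for all |x| ≥ M, with constants c_u, c_l, M > 0. Let α > 0 and let μ be a Borel probability measure on ℝ^d with finite second moment. Then the α-weighted measure η^α = ω μ / ∫ω dμ (where ω(x) = exp(−α f(x))) satisfies ∫ |x|² dη^α ≤ b₁ + b₂ ∫ |x|² dμ, with b₂ = 2 (c_u / c_l)(1 + 1/(α c_l M²)) and b₁ = M² + b₂. -/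
open MeasureTheory

set_option maxHeartbeats 1000000

theorem weighted_measure_second_moment {d : ℕ} (f : EuclideanSpace ℝ (Fin d) → ℝ)
    (hf : Measurable f) (fstar : ℝ) (hglb : IsGLB (Set.range f) fstar)
    (cu cl M : ℝ) (hcu : 0 < cu) (hcl : 0 < cl) (hM : 0 < M)
    (hgrow_up : ∀ x : EuclideanSpace ℝ (Fin d), f x - fstar ≤ cu * (1 + ‖x‖ ^ 2))
    (hgrow_low : ∀ x : EuclideanSpace ℝ (Fin d), M ≤ ‖x‖ → cl * ‖x‖ ^ 2 ≤ f x - fstar)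
    (α : ℝ) (hα : 0 < α)
    (μ : Measure (EuclideanSpace ℝ (Fin d))) [IsProbabilityMeasure μ]
    (hint : Integrable (fun x => ‖x‖ ^ 2) μ) :
    (∫ x, ‖x‖ ^ 2 ∂(μ.withDensity (fun x =>
        ENNReal.ofReal (Real.exp (-α * f x) / ∫ y, Real.exp (-α * f y) ∂μ)))) ≤
      (M ^ 2 + 2 * (cu / cl) * (1 + 1 / (α * cl * M ^ 2))) +
        2 * (cu / cl) * (1 + 1 / (α * cl * M ^ 2)) * ∫ x, ‖x‖ ^ 2 ∂μ := by
  set w : EuclideanSpace ℝ (Fin d) → ℝ := fun x => Real.exp (-α * f x) with hw_def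
  set Z : ℝ := ∫ y, w y ∂μ with hZ_def
  set V : ℝ := ∫ x, ‖x‖ ^ 2 ∂μ with hV_def
  have hfs : ∀ x, fstar ≤ f x := fun x => hglb.1 ⟨x, rfl⟩
  have hw_pos : ∀ x, 0 < w x := fun x => Real.exp_pos _
  have hw_meas : Measurable w := (hf.const_mul (-α)).exp
  have hw_le : ∀ x, w x ≤ Real.exp (-α * fstar) := by
    intro x
    apply Real.exp_le_exp.mpr
    nlinarith [hfs x, hα.le]
  have hw_int : Integrable w μ := by
    refine Integrable.mono' (integrable_const (Real.exp (-α * fstar)))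
      hw_meas.aestronglyMeasurable (Filter.Eventually.of_forall fun x => ?_)
    rw [Real.norm_eq_abs, abs_of_pos (hw_pos x)]
    exact hw_le x
  have hZ_pos : 0 < Z := by
    rw [hZ_def, integral_pos_iff_support_of_nonneg (fun x => (hw_pos x).le) hw_int]
    have : Function.support w = Set.univ := by
      ext x; simp [Function.mem_support, (hw_pos x).ne']
    rw [this]
    simp
  have hV_nonneg : 0 ≤ V := integral_nonneg fun x => by positivity
  have h1y_int : Integrable (fun y : EuclideanSpace ℝ (Fin d) => 1 + ‖y‖ ^ 2) μ :=
    (integrable_const 1).add hint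
  have hxw_int : Integrable (fun x => ‖x‖ ^ 2 * w x) μ := by
    refine Integrable.mono' (hint.const_mul (Real.exp (-α * fstar)))
      ((measurable_norm.pow_const 2).mul hw_meas).aestronglyMeasurable
      (Filter.Eventually.of_forall fun x => ?_)
    rw [Real.norm_eq_abs, abs_of_nonneg (by positivity)]
    calc ‖x‖ ^ 2 * w x ≤ ‖x‖ ^ 2 * Real.exp (-α * fstar) :=
          mul_le_mul_of_nonneg_left (hw_le x) (by positivity)
      _ = Real.exp (-α * fstar) * ‖x‖ ^ 2 := by ring
  set c1 : ℝ := 2 * cu / cl with hc1_def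
  set c2 : ℝ := 2 / (α * cl * M ^ 2) with hc2_def
  have hc1_pos : 0 < c1 := by positivity
  have hc2_pos : 0 < c2 := by positivity
  -- key pointwise inequality
  have key : ∀ x y, ‖x‖ ^ 2 * w x ≤
      M ^ 2 * w x + (c1 * w x) * (1 + ‖y‖ ^ 2) + (c2 * ‖x‖ ^ 2) * w y := by
    intro x y
    have hwx := hw_pos x
    have hwy := hw_pos y
    have hny : (0:ℝ) ≤ ‖y‖ ^ 2 := by positivity
    have hnx : (0:ℝ) ≤ ‖x‖ ^ 2 := by positivity
    have hp1 : (0:ℝ) ≤ M ^ 2 * w x := by positivity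
    have hp2 : (0:ℝ) ≤ c1 * w x * (1 + ‖y‖ ^ 2) := by positivity
    have hp3 : (0:ℝ) ≤ c2 * ‖x‖ ^ 2 * w y := by positivity
    rcases lt_or_ge ‖x‖ M with hxM | hxM
    · have hx2 : ‖x‖ ^ 2 ≤ M ^ 2 := by nlinarith [norm_nonneg x]
      have h1 : ‖x‖ ^ 2 * w x ≤ M ^ 2 * w x := mul_le_mul_of_nonneg_right hx2 hwx.le
      linarith
    · have hx2 : M ^ 2 ≤ ‖x‖ ^ 2 := by nlinarith [hM.le]
      rcases le_or_gt (cl * ‖x‖ ^ 2 / 2) (cu * (1 + ‖y‖ ^ 2)) with hc | hc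
      · have h1 : ‖x‖ ^ 2 ≤ c1 * (1 + ‖y‖ ^ 2) := by
          rw [hc1_def, div_mul_eq_mul_div, le_div_iff₀ hcl]
          nlinarith
        have h2 : ‖x‖ ^ 2 * w x ≤ (c1 * (1 + ‖y‖ ^ 2)) * w x :=
          mul_le_mul_of_nonneg_right h1 hwx.le
        linarith
      · -- far region
        have hgx := hgrow_low x hxM
        have hgy := hgrow_up y
        have ht : 0 < α * cl * M ^ 2 / 2 := by positivity
        have hexpM : Real.exp (-(α * cl * M ^ 2 / 2)) ≤ c2 := by
          have h2 : c2 = (α * cl * M ^ 2 / 2)⁻¹ := by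
            rw [hc2_def]; field_simp
          rw [h2, Real.exp_neg]
          apply inv_anti₀ ht
          have := Real.add_one_le_exp (α * cl * M ^ 2 / 2)
          linarith
        have hwx_le : w x ≤ c2 * w y := by
          have m1 : α * (cl * ‖x‖ ^ 2) ≤ α * (f x - fstar) :=
            mul_le_mul_of_nonneg_left hgx hα.le
          have m2 : α * (f y - fstar) ≤ α * (cl * ‖x‖ ^ 2 / 2) :=
            mul_le_mul_of_nonneg_left (hgy.trans hc.le) hα.le
          have m3 : α * cl * M ^ 2 ≤ α * cl * ‖x‖ ^ 2 :=
            mul_le_mul_of_nonneg_left hx2 (mul_nonneg hα.le hcl.le)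
          have e1 : w x ≤ Real.exp (-α * fstar - α * (cl * ‖x‖ ^ 2)) := by
            apply Real.exp_le_exp.mpr
            nlinarith [m1]
          have e2 : Real.exp (-α * fstar - α * (cl * ‖x‖ ^ 2)) =
              Real.exp (-(α * (cl * ‖x‖ ^ 2) / 2)) *
                Real.exp (-α * fstar - α * (cl * ‖x‖ ^ 2) / 2) := by
            rw [← Real.exp_add]
            congr 1
            ring
          have e3 : Real.exp (-(α * (cl * ‖x‖ ^ 2) / 2)) ≤
              Real.exp (-(α * cl * M ^ 2 / 2)) := by
            apply Real.exp_le_exp.mpr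
            nlinarith [m3]
          have e4 : Real.exp (-α * fstar - α * (cl * ‖x‖ ^ 2) / 2) ≤ w y := by
            apply Real.exp_le_exp.mpr
            nlinarith [m2]
          calc w x ≤ Real.exp (-α * fstar - α * (cl * ‖x‖ ^ 2)) := e1
            _ = Real.exp (-(α * (cl * ‖x‖ ^ 2) / 2)) *
                Real.exp (-α * fstar - α * (cl * ‖x‖ ^ 2) / 2) := e2
            _ ≤ c2 * w y := by
                apply mul_le_mul (e3.trans hexpM) e4 (Real.exp_pos _).le hc2_pos.le
        have h3 : ‖x‖ ^ 2 * w x ≤ (c2 * ‖x‖ ^ 2) * w y := by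
          calc ‖x‖ ^ 2 * w x ≤ ‖x‖ ^ 2 * (c2 * w y) :=
                mul_le_mul_of_nonneg_left hwx_le hnx
            _ = (c2 * ‖x‖ ^ 2) * w y := by ring
        linarith
  have hI1 : ∫ y, (1 + ‖y‖ ^ 2) ∂μ = 1 + V := by
    rw [integral_add (integrable_const 1) hint, integral_const]
    simp [hV_def]
  -- step 1: integrate over y
  have step1 : ∀ x, ‖x‖ ^ 2 * w x ≤
      M ^ 2 * w x + (c1 * (1 + V)) * w x + (c2 * Z) * ‖x‖ ^ 2 := by
    intro x
    have hInt2 : Integrable (fun y : EuclideanSpace ℝ (Fin d) =>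
        (c1 * w x) * (1 + ‖y‖ ^ 2)) μ := h1y_int.const_mul (c1 * w x)
    have hInt3 : Integrable (fun y : EuclideanSpace ℝ (Fin d) =>
        (c2 * ‖x‖ ^ 2) * w y) μ := hw_int.const_mul (c2 * ‖x‖ ^ 2)
    have hkey' : ∀ y, ‖x‖ ^ 2 * w x ≤
        M ^ 2 * w x + ((c1 * w x) * (1 + ‖y‖ ^ 2) + (c2 * ‖x‖ ^ 2) * w y) := by
      intro y
      have := key x y
      linarith
    have hInt23 : Integrable (fun y : EuclideanSpace ℝ (Fin d) =>
        (c1 * w x) * (1 + ‖y‖ ^ 2) + (c2 * ‖x‖ ^ 2) * w y) μ := hInt2.add hInt3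
    have hmono := integral_mono (integrable_const (‖x‖ ^ 2 * w x))
      ((integrable_const (M ^ 2 * w x)).add hInt23) hkey'
    simp only [Pi.add_apply] at hmono
    rw [integral_add (integrable_const (M ^ 2 * w x)) hInt23,
      integral_add hInt2 hInt3, integral_const, integral_const,
      integral_const_mul _ _, integral_const_mul _ _, hI1] at hmono
    simp only [measure_univ, probReal_univ, ENNReal.toReal_one, one_smul] at hmono
    rw [← hZ_def] at hmono
    linarith
  -- step 2: integrate over x
  have step2 : (∫ x, ‖x‖ ^ 2 * w x ∂μ) ≤
      M ^ 2 * Z + (c1 * (1 + V)) * Z + (c2 * Z) * V := by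
    have hI2a : Integrable (fun x : EuclideanSpace ℝ (Fin d) => M ^ 2 * w x) μ :=
      hw_int.const_mul (M ^ 2)
    have hI2b : Integrable (fun x : EuclideanSpace ℝ (Fin d) =>
        (c1 * (1 + V)) * w x) μ := hw_int.const_mul (c1 * (1 + V))
    have hI2c : Integrable (fun x : EuclideanSpace ℝ (Fin d) =>
        (c2 * Z) * ‖x‖ ^ 2) μ := hint.const_mul (c2 * Z)
    have hstep1' : ∀ x, ‖x‖ ^ 2 * w x ≤
        M ^ 2 * w x + ((c1 * (1 + V)) * w x + (c2 * Z) * ‖x‖ ^ 2) := by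
      intro x
      have := step1 x
      linarith
    have hI2bc : Integrable (fun x : EuclideanSpace ℝ (Fin d) =>
        (c1 * (1 + V)) * w x + (c2 * Z) * ‖x‖ ^ 2) μ := hI2b.add hI2c
    have hmono := integral_mono hxw_int (hI2a.add hI2bc) hstep1'
    simp only [Pi.add_apply] at hmono
    rw [integral_add hI2a hI2bc, integral_add hI2b hI2c,
      integral_const_mul _ _, integral_const_mul _ _, integral_const_mul _ _] at hmono
    rw [← hZ_def, ← hV_def] at hmono
    linarith
  -- compute the LHS
  have hLHS : (∫ x, ‖x‖ ^ 2 ∂(μ.withDensity (fun x => ENNReal.ofReal (w x / Z)))) =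
      (∫ x, ‖x‖ ^ 2 * w x ∂μ) / Z := by
    have hmeas : Measurable fun x => Real.toNNReal (w x / Z) :=
      (hw_meas.div_const Z).real_toNNReal
    have hrw : (fun x : EuclideanSpace ℝ (Fin d) => ENNReal.ofReal (w x / Z)) =
        fun x => (((w x / Z).toNNReal : NNReal) : ENNReal) := rfl
    rw [hrw, integral_withDensity_eq_integral_smul hmeas]
    have : ∀ x : EuclideanSpace ℝ (Fin d),
        Real.toNNReal (w x / Z) • ‖x‖ ^ 2 = (‖x‖ ^ 2 * w x) / Z := by
      intro x
      rw [NNReal.smul_def, Real.coe_toNNReal _ (div_nonneg (hw_pos x).le hZ_pos.le),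
        smul_eq_mul]
      ring
    rw [integral_congr_ae (Filter.Eventually.of_forall this), integral_div]
  -- the scalar inequality cl * V ≤ cu * (1 + V)
  have hVcu : cl * V ≤ cu * (1 + V) := by
    rcases Nat.eq_zero_or_pos d with hd | hd
    · have hV0 : V = 0 := by
        have hz : ∀ x : EuclideanSpace ℝ (Fin d), ‖x‖ ^ 2 = (0:ℝ) := by
          subst hd
          intro x
          have : x = 0 := Subsingleton.elim x 0
          simp [this]
        rw [hV_def]
        simp [hz]
      rw [hV0]
      nlinarith
    · have hclcu : cl ≤ cu := by
        by_contra hlt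
        push_neg at hlt
        set r : ℝ := max M (Real.sqrt (cu / (cl - cu)) + 1) with hr_def
        have hrM : M ≤ r := le_max_left _ _
        have hr0 : 0 < r := lt_of_lt_of_le hM hrM
        set x : EuclideanSpace ℝ (Fin d) := EuclideanSpace.single (⟨0, hd⟩ : Fin d) r with hx_def
        have hxn : ‖x‖ = r := by
          rw [hx_def, EuclideanSpace.norm_single, Real.norm_eq_abs, abs_of_pos hr0]
        have h1 := hgrow_low x (by rw [hxn]; exact hrM)
        have h2 := hgrow_up x
        rw [hxn] at h1 h2
        have hs : Real.sqrt (cu / (cl - cu)) + 1 ≤ r := le_max_right _ _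
        have hdpos : (0:ℝ) < cl - cu := by linarith
        have hsq : cu / (cl - cu) < r ^ 2 := by
          have h4 : Real.sqrt (cu / (cl - cu)) < r := by linarith
          calc cu / (cl - cu) = Real.sqrt (cu / (cl - cu)) ^ 2 :=
                (Real.sq_sqrt (le_of_lt (div_pos hcu hdpos))).symm
            _ < r ^ 2 := by nlinarith [Real.sqrt_nonneg (cu / (cl - cu))]
        have h5 : cu < r ^ 2 * (cl - cu) := (div_lt_iff₀ hdpos).mp hsq
        nlinarith
      nlinarith
  -- final combination
  rw [hLHS, div_le_iff₀ hZ_pos]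
  have hcoef : M ^ 2 + c1 * (1 + V) + c2 * V ≤
      (M ^ 2 + 2 * (cu / cl) * (1 + 1 / (α * cl * M ^ 2))) +
        2 * (cu / cl) * (1 + 1 / (α * cl * M ^ 2)) * V := by
    have hcc : V ≤ (cu / cl) * (1 + V) := by
      rw [div_mul_eq_mul_div, le_div_iff₀ hcl]
      nlinarith
    have h1 : c2 * V ≤ c2 * ((cu / cl) * (1 + V)) :=
      mul_le_mul_of_nonneg_left hcc hc2_pos.le
    have h2 : c2 * (cu / cl) = 2 * (cu / cl) * (1 / (α * cl * M ^ 2)) := by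
      rw [hc2_def]; ring
    have h3 : c1 = 2 * (cu / cl) := by rw [hc1_def]; ring
    nlinarith
  calc (∫ x, ‖x‖ ^ 2 * w x ∂μ) ≤ M ^ 2 * Z + (c1 * (1 + V)) * Z + (c2 * Z) * V := step2
    _ = (M ^ 2 + c1 * (1 + V) + c2 * V) * Z := by ring
    _ ≤ ((M ^ 2 + 2 * (cu / cl) * (1 + 1 / (α * cl * M ^ 2))) +
        2 * (cu / cl) * (1 + 1 / (α * cl * M ^ 2)) * V) * Z :=
      mul_le_mul_of_nonneg_right hcoef hZ_pos.le
end

section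
/- Let f : ℝ^d → ℝ be measurable and bounded below with infimum f*, let α > 0, and let μ be a Borel probability measure on ℝ^d. Let η^α be the α-weighted measure of μ. Then for all k, ℓ > 0 with μ({f − f* < ℓ}) > 0, one has η^α({x : f(x) − f* ≥ k}) ≤ exp(−α(k − ℓ)) · μ({x : f(x) − f* ≥ k}) / μ({x : f(x) − f* < ℓ}). -/
open MeasureTheory

theorem weighted_measure_tail_estimate {d : ℕ} (f : EuclideanSpace ℝ (Fin d) → ℝ)
    (hf : Measurable f) (fstar : ℝ) (hglb : IsGLB (Set.range f) fstar)
    (α : ℝ) (hα : 0 < α)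
    (μ : Measure (EuclideanSpace ℝ (Fin d))) [IsProbabilityMeasure μ]
    (k ℓ : ℝ) (hk : 0 < k) (hℓ : 0 < ℓ)
    (hpos : 0 < μ {x | f x - fstar < ℓ}) :
    ((μ.withDensity (fun x =>
        ENNReal.ofReal (Real.exp (-α * f x) / ∫ y, Real.exp (-α * f y) ∂μ)))
          {x | k ≤ f x - fstar}).toReal ≤
      Real.exp (-α * (k - ℓ)) * (μ {x | k ≤ f x - fstar}).toReal /
        (μ {x | f x - fstar < ℓ}).toReal := by
  have hfge : ∀ x, fstar ≤ f x := fun x => hglb.1 ⟨x, rfl⟩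
  have hwmeas : Measurable fun x => Real.exp (-α * f x) := (hf.const_mul (-α)).exp
  have hwpos : ∀ x, (0:ℝ) < Real.exp (-α * f x) := fun x => Real.exp_pos _
  have hwint : Integrable (fun x => Real.exp (-α * f x)) μ := by
    refine (integrable_const (Real.exp (-α * fstar))).mono'
      hwmeas.aestronglyMeasurable ?_
    filter_upwards with x
    rw [Real.norm_eq_abs, abs_of_pos (hwpos x)]
    exact Real.exp_le_exp.mpr (by nlinarith [hfge x])
  set Z : ℝ := ∫ y, Real.exp (-α * f y) ∂μ with hZdef
  set A := {x | k ≤ f x - fstar} with hAdef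
  set B := {x | f x - fstar < ℓ} with hBdef
  have hA : MeasurableSet A := measurableSet_le measurable_const (hf.sub measurable_const)
  have hB : MeasurableSet B := measurableSet_lt (hf.sub measurable_const) measurable_const
  have hμA : μ A < ⊤ := measure_lt_top μ A
  have hμB : μ B < ⊤ := measure_lt_top μ B
  have hBpos : 0 < (μ B).toReal := ENNReal.toReal_pos hpos.ne' hμB.ne
  have hZlb : Real.exp (-α * (fstar + ℓ)) * (μ B).toReal ≤ Z := by
    have h1 : Real.exp (-α * (fstar + ℓ)) * (μ B).toReal
        = ∫ _ in B, Real.exp (-α * (fstar + ℓ)) ∂μ := by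
      rw [setIntegral_const, smul_eq_mul, mul_comm]
      rfl
    rw [h1]
    calc ∫ _ in B, Real.exp (-α * (fstar + ℓ)) ∂μ
        ≤ ∫ x in B, Real.exp (-α * f x) ∂μ := by
          refine setIntegral_mono_on (integrableOn_const hμB.ne)
            hwint.integrableOn hB ?_
          intro x hx
          simp only [hBdef, Set.mem_setOf_eq] at hx
          exact Real.exp_le_exp.mpr (by nlinarith)
      _ ≤ Z := setIntegral_le_integral hwint (ae_of_all _ fun x => (hwpos x).le)
  have hZpos : 0 < Z := lt_of_lt_of_le (by positivity) hZlb
  have hnum : ∫ x in A, Real.exp (-α * f x) ∂μ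
      ≤ Real.exp (-α * (fstar + k)) * (μ A).toReal := by
    have h1 : Real.exp (-α * (fstar + k)) * (μ A).toReal
        = ∫ _ in A, Real.exp (-α * (fstar + k)) ∂μ := by
      rw [setIntegral_const, smul_eq_mul, mul_comm]
      rfl
    rw [h1]
    refine setIntegral_mono_on hwint.integrableOn
      (integrableOn_const hμA.ne) hA ?_
    intro x hx
    simp only [hAdef, Set.mem_setOf_eq] at hx
    exact Real.exp_le_exp.mpr (by nlinarith)
  have hdiv : Integrable (fun x => Real.exp (-α * f x) / Z) μ := hwint.div_const Z
  rw [withDensity_apply _ hA,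
    ← ofReal_integral_eq_lintegral_ofReal hdiv.integrableOn
      (ae_of_all _ fun x => div_nonneg (hwpos x).le hZpos.le),
    ENNReal.toReal_ofReal (integral_nonneg fun x => div_nonneg (hwpos x).le hZpos.le),
    integral_div]
  calc (∫ x in A, Real.exp (-α * f x) ∂μ) / Z
      ≤ (Real.exp (-α * (fstar + k)) * (μ A).toReal)
          / (Real.exp (-α * (fstar + ℓ)) * (μ B).toReal) :=
        div_le_div₀ (by positivity) hnum (by positivity) hZlb
    _ = Real.exp (-α * (k - ℓ)) * (μ A).toReal / (μ B).toReal := by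
        have h : -α * (k - ℓ) = -α * (fstar + k) - (-α * (fstar + ℓ)) := by ring
        rw [h, Real.exp_sub]
        field_simp
end

section
/- Let f ∈ C²(ℝ^d) be bounded below with infimum f̲, and suppose ‖∇²f‖_∞ ≤ c_f (the Hessian is bounded in operator norm by c_f) and Δf(x) ≤ c₀ + c₁|∇f(x)|² for all x ∈ ℝ^d, with constants c_f, c₀, c₁ > 0. Let λ, σ > 0, let α ≥ c₁, and let ρ be a Borel probability measure on ℝ^d with finite second moment; set m = m_f[ρ] and ω(x) = exp(−α f(x)). Then ∫ [ α λ (∇f(x) − ∇f(m)) · (x − m) + (σ²/2)( α² |∇f(x)|² − α Δf(x) ) |x − m|² ] ω(x) dρ(x) ≥ −α exp(−α f̲) ( c₀ σ²/2 + λ c_f ) ∫ |x − m|² dρ(x). -/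
open MeasureTheory
open scoped RealInnerProductSpace

lemma aux_pt (cf c₀ c₁ lam σ α r n L ip ω eb : ℝ)
    (hcf : 0 < cf) (hc₀ : 0 < c₀) (hα0 : 0 < α) (hα : c₁ ≤ α) (hlam : 0 < lam)
    (hσ : 0 < σ) (hω0 : 0 < ω) (hωle : ω ≤ eb)
    (hA : -(cf * r ^ 2) ≤ ip) (hB : L ≤ c₀ + c₁ * n ^ 2) :
    -(α * eb * (c₀ * σ ^ 2 / 2 + lam * cf)) * r ^ 2 ≤
      (α * lam * ip + σ ^ 2 / 2 * (α ^ 2 * n ^ 2 - α * L) * r ^ 2) * ω := by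
  have hCC : -(α * c₀) ≤ α ^ 2 * n ^ 2 - α * L := by
    nlinarith [mul_le_mul_of_nonneg_left hB hα0.le,
      mul_nonneg (mul_nonneg hα0.le (sub_nonneg.mpr hα)) (sq_nonneg n)]
  have e1 : α * lam * (-(cf * r ^ 2)) * ω ≤ α * lam * ip * ω := by
    apply mul_le_mul_of_nonneg_right _ hω0.le
    exact mul_le_mul_of_nonneg_left hA (by positivity)
  have e2 : σ ^ 2 / 2 * (-(α * c₀)) * r ^ 2 * ω ≤
      σ ^ 2 / 2 * (α ^ 2 * n ^ 2 - α * L) * r ^ 2 * ω := by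
    apply mul_le_mul_of_nonneg_right _ hω0.le
    apply mul_le_mul_of_nonneg_right _ (by positivity)
    exact mul_le_mul_of_nonneg_left hCC (by positivity)
  have e3 : (α * lam * cf + σ ^ 2 / 2 * (α * c₀)) * r ^ 2 * ω ≤
      (α * lam * cf + σ ^ 2 / 2 * (α * c₀)) * r ^ 2 * eb :=
    mul_le_mul_of_nonneg_left hωle (by positivity)
  nlinarith [e1, e2, e3]

theorem weight_mass_derivative_lower_bound {d : ℕ} (f : EuclideanSpace ℝ (Fin d) → ℝ)
    (hf : ContDiff ℝ 2 f) (fbar : ℝ) (hglb : IsGLB (Set.range f) fbar)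
    (cf c₀ c₁ : ℝ) (hcf : 0 < cf) (hc₀ : 0 < c₀) (hc₁ : 0 < c₁)
    (hHess : ∀ x : EuclideanSpace ℝ (Fin d), ‖fderiv ℝ (gradient f) x‖ ≤ cf)
    (hLap : ∀ x : EuclideanSpace ℝ (Fin d),
      (∑ i, ⟪fderiv ℝ (gradient f) x (EuclideanSpace.single i (1 : ℝ)),
        EuclideanSpace.single i (1 : ℝ)⟫) ≤ c₀ + c₁ * ‖gradient f x‖ ^ 2)
    (lam σ α : ℝ) (hlam : 0 < lam) (hσ : 0 < σ) (hα : c₁ ≤ α)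
    (ρ : Measure (EuclideanSpace ℝ (Fin d))) [IsProbabilityMeasure ρ]
    (hint : Integrable (fun x => ‖x‖ ^ 2) ρ)
    (m : EuclideanSpace ℝ (Fin d))
    (hm : m = (∫ x, Real.exp (-α * f x) ∂ρ)⁻¹ • ∫ x, Real.exp (-α * f x) • x ∂ρ) :
    (∫ x, (α * lam * ⟪gradient f x - gradient f m, x - m⟫ +
        σ ^ 2 / 2 * (α ^ 2 * ‖gradient f x‖ ^ 2 -
          α * ∑ i, ⟪fderiv ℝ (gradient f) x (EuclideanSpace.single i (1 : ℝ)),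
            EuclideanSpace.single i (1 : ℝ)⟫) * ‖x - m‖ ^ 2) *
        Real.exp (-α * f x) ∂ρ) ≥
      -(α * Real.exp (-α * fbar) * (c₀ * σ ^ 2 / 2 + lam * cf)) *
        ∫ x, ‖x - m‖ ^ 2 ∂ρ := by
  have hα0 : 0 < α := lt_of_lt_of_le hc₁ hα
  have hC0 : 0 ≤ α * Real.exp (-α * fbar) * (c₀ * σ ^ 2 / 2 + lam * cf) := by positivity
  -- gradient is differentiable
  have hgrad : Differentiable ℝ (gradient f) := by
    have h1 : ContDiff ℝ 1 (fderiv ℝ f) := hf.fderiv_right (by norm_num)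
    have h2 : gradient f = fun x =>
        (InnerProductSpace.toDual ℝ (EuclideanSpace ℝ (Fin d))).symm (fderiv ℝ f x) := rfl
    rw [h2]
    exact (((InnerProductSpace.toDual ℝ (EuclideanSpace ℝ (Fin d))).symm.contDiff.comp
      h1).differentiable one_ne_zero)
  have hLip : ∀ x : EuclideanSpace ℝ (Fin d),
      ‖gradient f x - gradient f m‖ ≤ cf * ‖x - m‖ := fun x =>
    convex_univ.norm_image_sub_le_of_norm_fderiv_le
      (fun y _ => (hgrad y)) (fun y _ => hHess y) trivial trivial
  -- pointwise bound
  have hpt : ∀ x : EuclideanSpace ℝ (Fin d),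
      -(α * Real.exp (-α * fbar) * (c₀ * σ ^ 2 / 2 + lam * cf)) * ‖x - m‖ ^ 2 ≤
      (α * lam * ⟪gradient f x - gradient f m, x - m⟫ +
        σ ^ 2 / 2 * (α ^ 2 * ‖gradient f x‖ ^ 2 -
          α * ∑ i, ⟪fderiv ℝ (gradient f) x (EuclideanSpace.single i (1 : ℝ)),
            EuclideanSpace.single i (1 : ℝ)⟫) * ‖x - m‖ ^ 2) *
        Real.exp (-α * f x) := by
    intro x
    have hωle : Real.exp (-α * f x) ≤ Real.exp (-α * fbar) := by
      apply Real.exp_le_exp.mpr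
      have : fbar ≤ f x := hglb.1 ⟨x, rfl⟩
      nlinarith
    have hA : -(cf * ‖x - m‖ ^ 2) ≤ ⟪gradient f x - gradient f m, x - m⟫ := by
      have h1 := abs_real_inner_le_norm (gradient f x - gradient f m) (x - m)
      have h2 := hLip x
      have h3 := abs_le.mp h1
      nlinarith [norm_nonneg (gradient f x - gradient f m), norm_nonneg (x - m)]
    exact aux_pt cf c₀ c₁ lam σ α ‖x - m‖ ‖gradient f x‖ _ _ _ _
      hcf hc₀ hα0 hα hlam hσ (Real.exp_pos _) hωle hA (hLap x)
  -- integrability of the lower bound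
  have hint2 : Integrable (fun x : EuclideanSpace ℝ (Fin d) => ‖x - m‖ ^ 2) ρ := by
    have hb : Integrable (fun x : EuclideanSpace ℝ (Fin d) => 2 * ‖x‖ ^ 2 + 2 * ‖m‖ ^ 2) ρ :=
      (hint.const_mul 2).add (integrable_const _)
    refine hb.mono ?_ ?_
    · exact (((continuous_id.sub continuous_const).norm.pow 2)).aestronglyMeasurable
    · filter_upwards with x
      have h1 : ‖x - m‖ ≤ ‖x‖ + ‖m‖ := norm_sub_le _ _
      have h2 : (0:ℝ) ≤ ‖x - m‖ := norm_nonneg _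
      rw [Real.norm_eq_abs, Real.norm_eq_abs, abs_of_nonneg (by positivity),
        abs_of_nonneg (by positivity)]
      nlinarith [sq_nonneg (‖x‖ - ‖m‖), mul_self_le_mul_self h2 h1]
  have hg_int : Integrable (fun x : EuclideanSpace ℝ (Fin d) =>
      -(α * Real.exp (-α * fbar) * (c₀ * σ ^ 2 / 2 + lam * cf)) * ‖x - m‖ ^ 2) ρ :=
    hint2.const_mul _
  by_cases hI : Integrable (fun x : EuclideanSpace ℝ (Fin d) =>
      (α * lam * ⟪gradient f x - gradient f m, x - m⟫ +
        σ ^ 2 / 2 * (α ^ 2 * ‖gradient f x‖ ^ 2 -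
          α * ∑ i, ⟪fderiv ℝ (gradient f) x (EuclideanSpace.single i (1 : ℝ)),
            EuclideanSpace.single i (1 : ℝ)⟫) * ‖x - m‖ ^ 2) *
        Real.exp (-α * f x)) ρ
  · have h := integral_mono hg_int hI hpt
    calc -(α * Real.exp (-α * fbar) * (c₀ * σ ^ 2 / 2 + lam * cf)) * ∫ x, ‖x - m‖ ^ 2 ∂ρ
        = ∫ x, -(α * Real.exp (-α * fbar) * (c₀ * σ ^ 2 / 2 + lam * cf)) * ‖x - m‖ ^ 2 ∂ρ :=
          (integral_const_mul _ _).symm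
      _ ≤ _ := h
  · rw [integral_undef hI]
    have h1 : 0 ≤ ∫ x, ‖x - m‖ ^ 2 ∂ρ := integral_nonneg fun x => by positivity
    nlinarith
end

section
/- Let λ, σ > 0, d ∈ ℕ, α > 0 and f̲ ∈ ℝ. Let V, W : [0,∞) → ℝ be continuously differentiable with V(t) ≥ 0 for all t, V(0) = K > 0, W(0) = b₀² with b₀ > 0, and suppose: (i) W'(t) ≥ −b₁ V(t) for all t ≥ 0, where 0 ≤ b₁ < 3/4; (ii) for every t ≥ 0 with W(t) > 0, V'(t) ≤ −(2λ − d σ² exp(−α f̲)/√(W(t))) V(t); and (iii) 2λ b₀² − K − 2 d σ² b₀ exp(−α f̲) ≥ 0. Then for all t ≥ 0, V(t) ≤ K exp(−q t), where q = 2(λ − (d σ²/b₀) exp(−α f̲)); moreover q ≥ K/b₀². -/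
set_option maxHeartbeats 1000000


theorem variance_decay_bootstrap (lam σ α fbar : ℝ) (d : ℕ)
    (hlam : 0 < lam) (hσ : 0 < σ)
    (V W : ℝ → ℝ) (hV : ContDiff ℝ 1 V) (hW : ContDiff ℝ 1 W)
    (K b₀ b₁ : ℝ) (hK : 0 < K) (hb₀ : 0 < b₀)
    (hVnonneg : ∀ t ≥ (0 : ℝ), 0 ≤ V t)
    (hV0 : V 0 = K) (hW0 : W 0 = b₀ ^ 2)
    (hb₁nonneg : 0 ≤ b₁) (hb₁ : b₁ < 3 / 4)
    (hWder : ∀ t ≥ (0 : ℝ), deriv W t ≥ -b₁ * V t)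
    (hVder : ∀ t ≥ (0 : ℝ), 0 < W t →
      deriv V t ≤ -(2 * lam - d * σ ^ 2 * Real.exp (-α * fbar) / Real.sqrt (W t)) * V t)
    (hparam : 2 * lam * b₀ ^ 2 - K - 2 * d * σ ^ 2 * b₀ * Real.exp (-α * fbar) ≥ 0) :
    (∀ t ≥ (0 : ℝ),
        V t ≤ K * Real.exp (-(2 * (lam - d * σ ^ 2 / b₀ * Real.exp (-α * fbar))) * t)) ∧
      2 * (lam - d * σ ^ 2 / b₀ * Real.exp (-α * fbar)) ≥ K / b₀ ^ 2 := by
  have hVd : Differentiable ℝ V := hV.differentiable one_ne_zero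
  have hWd : Differentiable ℝ W := hW.differentiable one_ne_zero
  set E := Real.exp (-α * fbar) with hE
  have hEpos : 0 < E := Real.exp_pos _
  set c : ℝ := (d : ℝ) * σ ^ 2 * E with hc
  have hcnn : 0 ≤ c := by positivity
  set q : ℝ := 2 * (lam - (d : ℝ) * σ ^ 2 / b₀ * E) with hqdef
  have hqc : q = 2 * lam - 2 * c / b₀ := by
    rw [hqdef, hc]; field_simp
  have hqK : q ≥ K / b₀ ^ 2 := by
    rw [ge_iff_le, div_le_iff₀ (by positivity)]
    have h1 : (2 * c / b₀) * b₀ ^ 2 = 2 * c * b₀ := by field_simp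
    have h2 : (2 : ℝ) * ↑d * σ ^ 2 * b₀ * E = 2 * c * b₀ := by rw [hc]; ring
    nlinarith [hparam, hqc]
  have hqpos : 0 < q := lt_of_lt_of_le (by positivity) hqK
  -- Grönwall lemma: while W > b₀²/4, V(s) e^{qs} is nonincreasing
  have hgd : ∀ s : ℝ, HasDerivAt (fun u => V u * Real.exp (q * u))
      (deriv V s * Real.exp (q * s) + V s * (q * Real.exp (q * s))) s := by
    intro s
    have h1 : HasDerivAt (fun u : ℝ => q * u) q s := by
      simpa using (hasDerivAt_id s).const_mul q
    have h2 : HasDerivAt (fun u => Real.exp (q * u)) (Real.exp (q * s) * q) s := h1.exp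
    have := ((hVd s).hasDerivAt).mul h2
    exact this.congr_deriv (by ring)
  have key : ∀ t₁ : ℝ, (∀ s, 0 ≤ s → s < t₁ → b₀ ^ 2 / 4 < W s) →
      ∀ s, 0 ≤ s → s ≤ t₁ → V s * Real.exp (q * s) ≤ K := by
    intro t₁ hWbig s hs hst
    have hanti : AntitoneOn (fun u => V u * Real.exp (q * u)) (Set.Icc 0 t₁) := by
      apply antitoneOn_of_deriv_nonpos (convex_Icc 0 t₁)
      · exact (hVd.continuous.mul (Real.continuous_exp.comp (continuous_const.mul continuous_id))).continuousOn
      · intro x _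
        exact (hgd x).differentiableAt.differentiableWithinAt
      · intro x hx
        rw [interior_Icc] at hx
        rw [(hgd x).deriv]
        have hWx : b₀ ^ 2 / 4 < W x := hWbig x hx.1.le hx.2
        have hWpos : 0 < W x := lt_trans (by positivity) hWx
        have hVx := hVder x hx.1.le hWpos
        have hsq0 : Real.sqrt (b₀ ^ 2 / 4) = b₀ / 2 := by
          rw [show b₀ ^ 2 / 4 = (b₀ / 2) ^ 2 by ring]
          exact Real.sqrt_sq (by positivity)
        have hsq : b₀ / 2 ≤ Real.sqrt (W x) := by
          rw [← hsq0]; exact Real.sqrt_le_sqrt hWx.le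
        have hsqpos : 0 < Real.sqrt (W x) := Real.sqrt_pos.2 hWpos
        have hdiv : c / Real.sqrt (W x) ≤ 2 * c / b₀ := by
          rw [div_le_div_iff₀ hsqpos hb₀]
          nlinarith
        have hVnn : 0 ≤ V x := hVnonneg x hx.1.le
        have hco : -(2 * lam - c / Real.sqrt (W x)) ≤ -q := by
          rw [hqc]; linarith
        have hsum : deriv V x + q * V x ≤ 0 := by
          have h5 : -(2 * lam - c / Real.sqrt (W x)) * V x ≤ -q * V x :=
            mul_le_mul_of_nonneg_right hco hVnn
          have h6 : deriv V x ≤ -(2 * lam - c / Real.sqrt (W x)) * V x := by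
            convert hVx using 3 <;> rw [hc]
          linarith
        calc deriv V x * Real.exp (q * x) + V x * (q * Real.exp (q * x))
            = (deriv V x + q * V x) * Real.exp (q * x) := by ring
          _ ≤ 0 * Real.exp (q * x) :=
              mul_le_mul_of_nonneg_right hsum (Real.exp_pos _).le
          _ = 0 := zero_mul _
    have h0mem : (0 : ℝ) ∈ Set.Icc (0 : ℝ) t₁ := ⟨le_refl 0, le_trans hs hst⟩
    have hsmem : s ∈ Set.Icc (0 : ℝ) t₁ := ⟨hs, hst⟩
    have := hanti h0mem hsmem hs
    simpa [hV0] using this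
  -- conversion helper
  have conv : ∀ s : ℝ, V s * Real.exp (q * s) ≤ K → V s ≤ K * Real.exp (-q * s) := by
    intro s h
    rw [show (-q * s) = -(q * s) by ring, Real.exp_neg, ← div_eq_mul_inv,
      le_div_iff₀ (Real.exp_pos _)]
    exact h
  -- bootstrap: W never reaches b₀²/4
  have hWlarge : ∀ t, 0 ≤ t → b₀ ^ 2 / 4 < W t := by
    by_contra hcon
    push_neg at hcon
    obtain ⟨t', ht'0, ht'W⟩ := hcon
    set A : Set ℝ := {t | 0 ≤ t ∧ W t ≤ b₀ ^ 2 / 4} with hA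
    have hAclosed : IsClosed A := by
      have : A = {t | 0 ≤ t} ∩ {t | W t ≤ b₀ ^ 2 / 4} := rfl
      rw [this]
      exact (isClosed_le continuous_const continuous_id).inter
        (isClosed_le hWd.continuous continuous_const)
    have hAne : A.Nonempty := ⟨t', ht'0, ht'W⟩
    have hAbdd : BddBelow A := ⟨0, fun x hx => hx.1⟩
    set t₀ := sInf A with ht₀
    have ht₀A : t₀ ∈ A := hAclosed.csInf_mem hAne hAbdd
    have ht₀0 : 0 ≤ t₀ := ht₀A.1
    have hbefore : ∀ s, 0 ≤ s → s < t₀ → b₀ ^ 2 / 4 < W s := by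
      intro s hs hst
      by_contra h
      push_neg at h
      exact absurd (csInf_le hAbdd ⟨hs, h⟩) (not_le.2 hst)
    have hVb := key t₀ hbefore
    set B := b₁ * K / q with hB
    have hBnn : 0 ≤ B := by positivity
    have hBq : B * q = b₁ * K := by
      rw [hB]; field_simp
    have hhd : ∀ s : ℝ, HasDerivAt (fun u => W u - B * Real.exp (-q * u))
        (deriv W s - B * (Real.exp (-q * s) * -q)) s := by
      intro s
      have h1 : HasDerivAt (fun u : ℝ => -q * u) (-q) s := by
        simpa using (hasDerivAt_id s).const_mul (-q)
      have h2 : HasDerivAt (fun u => Real.exp (-q * u)) (Real.exp (-q * s) * -q) s := h1.exp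
      exact ((hWd s).hasDerivAt).sub (h2.const_mul B)
    have hmono : MonotoneOn (fun u => W u - B * Real.exp (-q * u)) (Set.Icc 0 t₀) := by
      apply monotoneOn_of_deriv_nonneg (convex_Icc 0 t₀)
      · exact (hWd.continuous.sub (continuous_const.mul (Real.continuous_exp.comp (continuous_const.mul continuous_id)))).continuousOn
      · intro x _
        exact (hhd x).differentiableAt.differentiableWithinAt
      · intro x hx
        rw [interior_Icc] at hx
        rw [(hhd x).deriv]
        have hVx : V x ≤ K * Real.exp (-q * x) :=
          conv x (hVb x hx.1.le hx.2.le)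
        have hWx := hWder x hx.1.le
        have hepos : 0 < Real.exp (-q * x) := Real.exp_pos _
        have hb1V : -b₁ * V x ≥ -b₁ * (K * Real.exp (-q * x)) := by
          have := mul_le_mul_of_nonneg_left hVx hb₁nonneg
          linarith
        have h7 : B * (Real.exp (-q * x) * -q) = -b₁ * (K * Real.exp (-q * x)) := by
          rw [hB]; field_simp
        rw [h7]
        linarith
    have h0mem : (0 : ℝ) ∈ Set.Icc (0 : ℝ) t₀ := ⟨le_refl 0, ht₀0⟩
    have ht₀mem : t₀ ∈ Set.Icc (0 : ℝ) t₀ := ⟨ht₀0, le_refl t₀⟩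
    have hmW := hmono h0mem ht₀mem ht₀0
    simp only at hmW
    have hexp0 : Real.exp (-q * 0) = 1 := by norm_num
    have hexple : Real.exp (-q * t₀) ≤ 1 := by
      rw [Real.exp_le_one_iff]; nlinarith
    have hWt₀ : W t₀ ≥ b₀ ^ 2 - B := by
      have hexppos : 0 < Real.exp (-q * t₀) := Real.exp_pos _
      rw [hexp0] at hmW
      nlinarith [hW0]
    have hKq : K / q ≤ b₀ ^ 2 := by
      rw [div_le_iff₀ hqpos]
      have := (div_le_iff₀ (show (0:ℝ) < b₀ ^ 2 by positivity)).1 hqK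
      linarith
    have hKle : K ≤ q * b₀ ^ 2 := by
      rw [ge_iff_le, div_le_iff₀ (by positivity)] at hqK
      linarith
    have hBle : B ≤ b₁ * b₀ ^ 2 := by
      rw [hB, div_le_iff₀ hqpos]
      nlinarith [hKle]
    have hprod : (3 / 4 - b₁) * b₀ ^ 2 > 0 :=
      mul_pos (by linarith) (by positivity)
    have : b₀ ^ 2 / 4 < W t₀ := by nlinarith
    exact absurd ht₀A.2 (not_le.2 this)
  constructor
  · intro t ht
    have h := key (t + 1) (fun s hs _ => hWlarge s hs) t ht (by linarith)
    have := conv t h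
    calc V t ≤ K * Real.exp (-q * t) := this
      _ = K * Real.exp (-q * t) := rfl
  · exact hqK
end

section
/- Let f : ℝ^d → ℝ be continuous and bounded below, let α > 0, and let (ρ_t)_{t ≥ 0} be a family of Borel probability measures on ℝ^d with finite second moments such that V(ρ_t) → 0 and E(ρ_t) → x̃ ∈ ℝ^d as t → ∞. Suppose furthermore that there is b ≥ 0 such that (∫ exp(−α f) dρ₀)² ≤ (∫ exp(−α f) dρ_t)² + b for all t ≥ 0. Then (∫ exp(−α f) dρ₀)² ≤ exp(−2α f(x̃)) + b; equivalently, −(1/α) log(∫ exp(−α f) dρ₀) ≥ f(x̃) − (1/(2α)) log(1 + b·exp(2α f(x̃))). -/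
open MeasureTheory Filter

theorem consensus_point_near_minimum {d : ℕ} (f : EuclideanSpace ℝ (Fin d) → ℝ)
    (hf : Continuous f) (hbdd : BddBelow (Set.range f))
    (α : ℝ) (hα : 0 < α)
    (ρ : ℝ → Measure (EuclideanSpace ℝ (Fin d)))
    (hprob : ∀ t, IsProbabilityMeasure (ρ t))
    (hint : ∀ t, Integrable (fun x => ‖x‖ ^ 2) (ρ t))
    (xt : EuclideanSpace ℝ (Fin d))
    (hvar : Tendsto (fun t => (1 / 2 : ℝ) * ∫ x, ‖x - ∫ y, y ∂(ρ t)‖ ^ 2 ∂(ρ t))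
      atTop (nhds 0))
    (hmean : Tendsto (fun t => ∫ x, x ∂(ρ t)) atTop (nhds xt))
    (b : ℝ) (hb : 0 ≤ b)
    (hmass : ∀ t ≥ (0 : ℝ),
      (∫ x, Real.exp (-α * f x) ∂(ρ 0)) ^ 2 ≤ (∫ x, Real.exp (-α * f x) ∂(ρ t)) ^ 2 + b) :
    (∫ x, Real.exp (-α * f x) ∂(ρ 0)) ^ 2 ≤ Real.exp (-2 * α * f xt) + b ∧
      -(1 / α) * Real.log (∫ x, Real.exp (-α * f x) ∂(ρ 0)) ≥
        f xt - 1 / (2 * α) * Real.log (1 + b * Real.exp (2 * α * f xt)) := by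
  obtain ⟨B, hB⟩ := hbdd
  set g : EuclideanSpace ℝ (Fin d) → ℝ := fun x => Real.exp (-α * f x) with hgdef
  have hgc : Continuous g := by continuity
  set M : ℝ := Real.exp (-α * B) with hMdef
  have hMpos : 0 < M := Real.exp_pos _
  have hgM : ∀ x, g x ≤ M := fun x =>
    Real.exp_le_exp.2 (by nlinarith [hB (Set.mem_range_self x)])
  have hgpos : ∀ x, 0 < g x := fun x => Real.exp_pos _
  have hgint : ∀ t, Integrable g (ρ t) := by
    intro t
    have := hprob t
    refine (integrable_const M).mono' hgc.aestronglyMeasurable ?_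
    filter_upwards with x
    rw [Real.norm_eq_abs, abs_of_pos (hgpos x)]
    exact hgM x
  have hint2 : ∀ t (c : EuclideanSpace ℝ (Fin d)),
      Integrable (fun x => ‖x - c‖ ^ 2) (ρ t) := by
    intro t c
    have := hprob t
    have hInt : Integrable (fun x : EuclideanSpace ℝ (Fin d) =>
        2 * ‖x‖ ^ 2 + 2 * ‖c‖ ^ 2) (ρ t) := ((hint t).const_mul 2).add (integrable_const _)
    refine hInt.mono' (((continuous_id.sub continuous_const).norm.pow 2).aestronglyMeasurable) ?_
    filter_upwards with x
    rw [Real.norm_eq_abs, abs_of_nonneg (by positivity)]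
    have h1 : ‖x - c‖ ≤ ‖x‖ + ‖c‖ := norm_sub_le x c
    nlinarith [norm_nonneg (x - c), norm_nonneg x, norm_nonneg c, sq_nonneg (‖x‖ - ‖c‖)]
  set W : ℝ → ℝ := fun t =>
    2 * ∫ x, ‖x - ∫ y, y ∂(ρ t)‖ ^ 2 ∂(ρ t) + 2 * ‖(∫ x, x ∂(ρ t)) - xt‖ ^ 2 with hWdef
  have hW0 : Tendsto W atTop (nhds 0) := by
    have h1 := hvar.const_mul (4 : ℝ)
    rw [mul_zero] at h1
    have h2 := ((hmean.sub (tendsto_const_nhds (x := xt))).norm.pow 2).const_mul (2 : ℝ)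
    rw [show (2 : ℝ) * ‖xt - xt‖ ^ 2 = 0 by simp] at h2
    have h3 := h1.add h2
    rw [add_zero] at h3
    refine h3.congr fun t => ?_
    simp only [hWdef]
    ring
  have hWbound : ∀ t, ∫ x, ‖x - xt‖ ^ 2 ∂(ρ t) ≤ W t := by
    intro t
    have hInt1 := hint2 t (∫ y, y ∂(ρ t))
    have := hprob t
    have key : ∫ x, ‖x - xt‖ ^ 2 ∂(ρ t) ≤
        ∫ x, (2 * ‖x - ∫ y, y ∂(ρ t)‖ ^ 2 + 2 * ‖(∫ y, y ∂(ρ t)) - xt‖ ^ 2) ∂(ρ t) := by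
      refine integral_mono (hint2 t xt) ((hInt1.const_mul 2).add (integrable_const _)) ?_
      intro x
      have h1 : ‖x - xt‖ ≤ ‖x - ∫ y, y ∂(ρ t)‖ + ‖(∫ y, y ∂(ρ t)) - xt‖ := by
        simpa [dist_eq_norm] using dist_triangle x (∫ y, y ∂(ρ t)) xt
      dsimp only
      nlinarith [norm_nonneg (x - ∫ y, y ∂(ρ t)), norm_nonneg ((∫ y, y ∂(ρ t)) - xt),
        sq_nonneg (‖x - ∫ y, y ∂(ρ t)‖ - ‖(∫ y, y ∂(ρ t)) - xt‖),
        pow_le_pow_left₀ (norm_nonneg (x - xt)) h1 2]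
    rw [integral_add (hInt1.const_mul 2) (integrable_const _), integral_const_mul,
      integral_const, probReal_univ] at key
    simpa using key
  have hG : Tendsto (fun t => ∫ x, g x ∂(ρ t)) atTop (nhds (g xt)) := by
    rw [Metric.tendsto_nhds]
    intro ε hε
    obtain ⟨δ, hδ, hδ'⟩ := Metric.continuous_iff.1 hgc xt (ε / 2) (half_pos hε)
    set C : ℝ := 2 * M / δ ^ 2 with hCdef
    have hCpos : 0 < C := by positivity
    have hCδ : C * δ ^ 2 = 2 * M := by rw [hCdef]; field_simp
    have hpt : ∀ x, |g x - g xt| ≤ ε / 2 + C * ‖x - xt‖ ^ 2 := by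
      intro x
      rcases lt_or_ge (dist x xt) δ with h | h
      · have := hδ' x h
        rw [Real.dist_eq] at this
        nlinarith [sq_nonneg ‖x - xt‖]
      · have habs : |g x - g xt| ≤ M := by
          rw [abs_le]
          constructor <;> nlinarith [hgM x, hgM xt, hgpos x, hgpos xt]
        have hd : δ ≤ ‖x - xt‖ := by rwa [dist_eq_norm] at h
        have hsq : δ ^ 2 ≤ ‖x - xt‖ ^ 2 := by nlinarith
        nlinarith [mul_le_mul_of_nonneg_left hsq hCpos.le]
    have hev : ∀ᶠ t in atTop, C * W t < ε / 2 := by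
      have h := hW0.const_mul C
      rw [mul_zero] at h
      exact h.eventually_lt_const (half_pos hε)
    filter_upwards [hev] with t hWt
    have := hprob t
    have heq : (∫ x, g x ∂(ρ t)) - g xt = ∫ x, (g x - g xt) ∂(ρ t) := by
      rw [integral_sub (hgint t) (integrable_const _), integral_const, probReal_univ]
      simp
    have h1 : |∫ x, (g x - g xt) ∂(ρ t)| ≤ ∫ x, |g x - g xt| ∂(ρ t) := by
      simpa [Real.norm_eq_abs] using
        norm_integral_le_integral_norm (μ := ρ t) (fun x => g x - g xt)
    have h2 : ∫ x, |g x - g xt| ∂(ρ t) ≤ ∫ x, (ε / 2 + C * ‖x - xt‖ ^ 2) ∂(ρ t) := by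
      refine integral_mono ((hgint t).sub (integrable_const _)).abs
        ((integrable_const _).add ((hint2 t xt).const_mul C)) ?_
      intro x; exact hpt x
    have h3 : ∫ x, (ε / 2 + C * ‖x - xt‖ ^ 2) ∂(ρ t) =
        ε / 2 + C * ∫ x, ‖x - xt‖ ^ 2 ∂(ρ t) := by
      rw [integral_add (integrable_const _) ((hint2 t xt).const_mul C), integral_const_mul,
        integral_const, probReal_univ]
      simp
    have h4 : C * ∫ x, ‖x - xt‖ ^ 2 ∂(ρ t) ≤ C * W t :=
      mul_le_mul_of_nonneg_left (hWbound t) hCpos.le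
    rw [Real.dist_eq, heq]
    calc |∫ x, (g x - g xt) ∂(ρ t)| ≤ ∫ x, |g x - g xt| ∂(ρ t) := h1
      _ ≤ ε / 2 + C * ∫ x, ‖x - xt‖ ^ 2 ∂(ρ t) := h2.trans_eq h3
      _ < ε := by linarith [h4.trans_lt hWt]
  have hexp2 : (g xt) ^ 2 = Real.exp (-2 * α * f xt) := by
    rw [hgdef, sq, ← Real.exp_add]; ring_nf
  have hfirst : (∫ x, Real.exp (-α * f x) ∂(ρ 0)) ^ 2 ≤ Real.exp (-2 * α * f xt) + b := by
    rw [← hexp2]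
    have hlim : Tendsto (fun t => (∫ x, g x ∂(ρ t)) ^ 2 + b) atTop
        (nhds ((g xt) ^ 2 + b)) := (hG.pow 2).add_const b
    exact ge_of_tendsto hlim (eventually_atTop.2 ⟨0, fun t ht => hmass t ht⟩)
  refine ⟨hfirst, ?_⟩
  have hprob0 := hprob 0
  have hApos : 0 < ∫ x, Real.exp (-α * f x) ∂(ρ 0) := by
    have h : 0 < ∫ x, g x ∂(ρ 0) := by
      rw [integral_pos_iff_support_of_nonneg (fun x => (hgpos x).le) (hgint 0)]
      have hsupp : Function.support g = Set.univ := by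
        ext x; simp [Function.mem_support, (hgpos x).ne']
      rw [hsupp, measure_univ]; norm_num
    exact h
  set A : ℝ := ∫ x, Real.exp (-α * f x) ∂(ρ 0) with hAdef
  set L : ℝ := Real.log (1 + b * Real.exp (2 * α * f xt)) with hLdef
  have hprod : Real.exp (-2 * α * f xt) + b =
      Real.exp (-2 * α * f xt) * (1 + b * Real.exp (2 * α * f xt)) := by
    rw [mul_add, mul_one]
    congr 1
    rw [mul_comm b, ← mul_assoc, ← Real.exp_add]
    ring_nf
    simp
  have h1pb : (0 : ℝ) < 1 + b * Real.exp (2 * α * f xt) := by positivity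
  have hlog : 2 * Real.log A ≤ -2 * α * f xt + L := by
    have hle : A ^ 2 ≤ Real.exp (-2 * α * f xt) * (1 + b * Real.exp (2 * α * f xt)) := by
      rw [← hprod]; exact hfirst
    have h := Real.log_le_log (by positivity) hle
    rwa [Real.log_pow, Real.log_mul (Real.exp_ne_zero _) h1pb.ne', Real.log_exp,
      ← hLdef, Nat.cast_ofNat] at h
  have h4 : f xt ≤ (-2 * Real.log A + L) / (2 * α) := by
    rw [le_div_iff₀ (by positivity)]
    nlinarith
  rw [ge_iff_le]
  calc f xt - 1 / (2 * α) * L ≤ (-2 * Real.log A + L) / (2 * α) - 1 / (2 * α) * L := by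
        linarith
    _ = -(1 / α) * Real.log A := by field_simp; ring
end

section
/- Let f : ℝ^d → ℝ be measurable and bounded below with infimum f̲, let α > 0, and let ρ be a Borel probability measure on ℝ^d with finite second moment and ∫ exp(−α f) dρ > 0. Then |E(ρ) − m_f[ρ]| ≤ ∫ |x − m_f[ρ]| dρ ≤ ( 2 exp(−α f̲) V(ρ) / ∫ exp(−α f) dρ )^{1/2}. -/
open MeasureTheory
open scoped RealInnerProductSpace

private lemma cs_int {X : Type*} {mX : MeasurableSpace X} {μ : Measure X} {p q : X → ℝ}
    (hp0 : ∀ x, 0 ≤ p x) (hq0 : ∀ x, 0 ≤ q x) (hp : MemLp p 2 μ) (hq : MemLp q 2 μ) :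
    ∫ x, p x * q x ∂μ ≤ Real.sqrt (∫ x, p x ^ 2 ∂μ) * Real.sqrt (∫ x, q x ^ 2 ∂μ) := by
  have hpq : (2:ℝ).HolderConjugate 2 := by
    rw [Real.holderConjugate_iff]; norm_num
  have h2 : (ENNReal.ofReal (2:ℝ)) = 2 := by
    rw [ENNReal.ofReal_ofNat]
  have h := integral_mul_le_Lp_mul_Lq_of_nonneg hpq (Filter.Eventually.of_forall hp0)
    (Filter.Eventually.of_forall hq0) (by rw [h2]; exact hp) (by rw [h2]; exact hq)
  have e1 : ∀ (g : X → ℝ), (∫ x, g x ^ (2:ℝ) ∂μ) = ∫ x, g x ^ 2 ∂μ := by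
    intro g; congr 1; funext x
    rw [show ((2:ℝ)) = ((2:ℕ):ℝ) by norm_num, Real.rpow_natCast]
  rw [e1, e1] at h
  calc ∫ x, p x * q x ∂μ ≤ (∫ x, p x ^ 2 ∂μ) ^ (1/2 : ℝ) * (∫ x, q x ^ 2 ∂μ) ^ (1/2:ℝ) := h
    _ = _ := by rw [← Real.sqrt_eq_rpow, ← Real.sqrt_eq_rpow]

set_option maxHeartbeats 1000000 in
theorem mean_weighted_mean_distance {d : ℕ} (f : EuclideanSpace ℝ (Fin d) → ℝ)
    (hf : Measurable f) (fbar : ℝ) (hglb : IsGLB (Set.range f) fbar)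
    (α : ℝ) (hα : 0 < α)
    (ρ : Measure (EuclideanSpace ℝ (Fin d))) [IsProbabilityMeasure ρ]
    (hint : Integrable (fun x => ‖x‖ ^ 2) ρ)
    (hpos : 0 < ∫ x, Real.exp (-α * f x) ∂ρ) :
    ‖(∫ x, x ∂ρ) -
        (∫ x, Real.exp (-α * f x) ∂ρ)⁻¹ • ∫ x, Real.exp (-α * f x) • x ∂ρ‖ ≤
      (∫ x, ‖x - (∫ y, Real.exp (-α * f y) ∂ρ)⁻¹ • ∫ y, Real.exp (-α * f y) • y ∂ρ‖ ∂ρ) ∧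
    (∫ x, ‖x - (∫ y, Real.exp (-α * f y) ∂ρ)⁻¹ • ∫ y, Real.exp (-α * f y) • y ∂ρ‖ ∂ρ) ≤
      Real.sqrt (2 * Real.exp (-α * fbar) *
        ((1 / 2) * ∫ x, ‖x - ∫ y, y ∂ρ‖ ^ 2 ∂ρ) / ∫ x, Real.exp (-α * f x) ∂ρ) := by
  set c : ℝ := Real.exp (-α * fbar) with hcdef
  set Z : ℝ := ∫ x, Real.exp (-α * f x) ∂ρ with hZdef
  set M : EuclideanSpace ℝ (Fin d) := ∫ x, Real.exp (-α * f x) • x ∂ρ with hMdef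
  set m : EuclideanSpace ℝ (Fin d) := Z⁻¹ • M with hmdef
  set EE : EuclideanSpace ℝ (Fin d) := ∫ y, y ∂ρ with hEEdef
  set S : ℝ := ∫ x, ‖x - EE‖ ^ 2 ∂ρ with hSdef
  have hc0 : 0 < c := Real.exp_pos _
  have hω0 : ∀ x, 0 < Real.exp (-α * f x) := fun x => Real.exp_pos _
  have hωc : ∀ x, Real.exp (-α * f x) ≤ c := by
    intro x
    have hfx : fbar ≤ f x := hglb.1 (Set.mem_range_self x)
    exact Real.exp_le_exp.2 (by nlinarith)
  have hmeasω : Measurable fun x => Real.exp (-α * f x) := (hf.const_mul (-α)).exp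
  -- integrability facts
  have hint' : Integrable (fun x : EuclideanSpace ℝ (Fin d) => 1 + ‖x‖ ^ 2) ρ :=
    (integrable_const 1).add hint
  have hxi : Integrable (fun x : EuclideanSpace ℝ (Fin d) => x) ρ := by
    refine hint'.mono' measurable_id.aestronglyMeasurable
      (Filter.Eventually.of_forall fun x => ?_)
    have := norm_nonneg (x : EuclideanSpace ℝ (Fin d))
    nlinarith [sq_nonneg (‖(x : EuclideanSpace ℝ (Fin d))‖ - 1)]
  have hωi : Integrable (fun x => Real.exp (-α * f x)) ρ := by
    refine (integrable_const c).mono' hmeasω.aestronglyMeasurable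
      (Filter.Eventually.of_forall fun x => ?_)
    rw [Real.norm_eq_abs, abs_of_pos (hω0 x)]; exact hωc x
  have hωxi : Integrable (fun x => Real.exp (-α * f x) • x) ρ := by
    refine (hint'.const_mul c).mono'
      (hmeasω.aestronglyMeasurable.smul measurable_id.aestronglyMeasurable)
      (Filter.Eventually.of_forall fun x => ?_)
    rw [norm_smul, Real.norm_eq_abs, abs_of_pos (hω0 x)]
    have h1 := hωc x
    have h2 := (hω0 x).le
    have h3 := norm_nonneg (x : EuclideanSpace ℝ (Fin d))
    nlinarith [sq_nonneg (‖(x : EuclideanSpace ℝ (Fin d))‖ - 1)]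
  have hsub : ∀ b : EuclideanSpace ℝ (Fin d),
      Integrable (fun x => x - b) ρ := fun b => hxi.sub (integrable_const b)
  have hnsq : ∀ b : EuclideanSpace ℝ (Fin d),
      Integrable (fun x => ‖x - b‖ ^ 2) ρ := by
    intro b
    have hg : Integrable (fun x : EuclideanSpace ℝ (Fin d) => 2 * ‖x‖ ^ 2 + 2 * ‖b‖ ^ 2) ρ := by
      exact (hint.const_mul 2).add (integrable_const (2 * ‖b‖ ^ 2))
    refine hg.mono'
      ((continuous_id.sub continuous_const).norm.pow 2).aestronglyMeasurable
      (Filter.Eventually.of_forall fun x => ?_)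
    rw [Real.norm_eq_abs, abs_of_nonneg (by positivity)]
    have h1 := norm_sub_le (x : EuclideanSpace ℝ (Fin d)) b
    have h2 : ‖x - b‖ ^ 2 ≤ (‖(x : EuclideanSpace ℝ (Fin d))‖ + ‖b‖) ^ 2 :=
      pow_le_pow_left₀ (norm_nonneg _) h1 2
    nlinarith [h2, sq_nonneg (‖(x : EuclideanSpace ℝ (Fin d))‖ - ‖b‖)]
  have hωnsq : ∀ b : EuclideanSpace ℝ (Fin d),
      Integrable (fun x => Real.exp (-α * f x) * ‖x - b‖ ^ 2) ρ := fun b =>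
    (hnsq b).bdd_mul hmeasω.aestronglyMeasurable
      (Filter.Eventually.of_forall fun x => by rw [Real.norm_eq_abs, abs_of_pos (hω0 x)]; exact hωc x)
  have hωsubi : ∀ b : EuclideanSpace ℝ (Fin d),
      Integrable (fun x => Real.exp (-α * f x) • (x - b)) ρ := by
    intro b
    have : (fun x => Real.exp (-α * f x) • (x - b)) =
        fun x => Real.exp (-α * f x) • x - Real.exp (-α * f x) • b := by
      funext x; rw [smul_sub]
    rw [this]; exact hωxi.sub (hωi.smul_const b)
  -- basic integral identities
  have hEx : ∫ x, (x - EE) ∂ρ = 0 := by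
    rw [integral_sub hxi (integrable_const EE), integral_const]
    simp [← hEEdef]
  have hZm : Z • m = M := by
    rw [hmdef, smul_smul, mul_inv_cancel₀ (ne_of_gt hpos), one_smul]
  have hωxm0 : ∫ x, Real.exp (-α * f x) • (x - m) ∂ρ = 0 := by
    have : (fun x => Real.exp (-α * f x) • (x - m)) =
        fun x => Real.exp (-α * f x) • x - Real.exp (-α * f x) • m := by
      funext x; rw [smul_sub]
    rw [this, integral_sub hωxi (hωi.smul_const m), integral_smul_const, ← hZdef, ← hMdef,
      hZm, sub_self]
  have hwint : ∫ x, (c - Real.exp (-α * f x)) ∂ρ = c - Z := by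
    rw [integral_sub (integrable_const c) hωi, integral_const, ← hZdef]
    simp
  have hkey : ∫ x, (c - Real.exp (-α * f x)) • (x - EE) ∂ρ = Z • EE - M := by
    have e : (fun x => (c - Real.exp (-α * f x)) • (x - EE)) =
        fun x => c • (x - EE) - Real.exp (-α * f x) • (x - EE) := by
      funext x; rw [sub_smul]
    have hcsub : Integrable (fun x => c • (x - EE)) ρ := (hsub EE).smul c
    rw [e, integral_sub hcsub (hωsubi EE), integral_smul, hEx, smul_zero]
    have e2 : (fun x => Real.exp (-α * f x) • (x - EE)) =
        fun x => Real.exp (-α * f x) • x - Real.exp (-α * f x) • EE := by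
      funext x; rw [smul_sub]
    rw [e2, integral_sub hωxi (hωi.smul_const EE), integral_smul_const, ← hZdef, ← hMdef]
    abel
  -- identity (I)
  have hinner1 : Integrable (fun x => ⟪EE - m, x - EE⟫) ρ := by
    have := (innerSL ℝ (EE - m)).integrable_comp (hsub EE)
    simpa only [innerSL_apply_apply] using this
  have hI : ∫ x, ‖x - m‖ ^ 2 ∂ρ = S + ‖EE - m‖ ^ 2 := by
    have ex : ∀ x : EuclideanSpace ℝ (Fin d),
        ‖x - m‖ ^ 2 = ‖x - EE‖ ^ 2 + 2 * ⟪EE - m, x - EE⟫ + ‖EE - m‖ ^ 2 := by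
      intro x
      have h := norm_add_sq_real (x - EE) (EE - m)
      rw [sub_add_sub_cancel] at h
      rw [h, real_inner_comm]
    calc ∫ x, ‖x - m‖ ^ 2 ∂ρ
        = ∫ x, (‖x - EE‖ ^ 2 + 2 * ⟪EE - m, x - EE⟫ + ‖EE - m‖ ^ 2) ∂ρ := by
          exact integral_congr_ae (Filter.Eventually.of_forall ex)
      _ = S + ‖EE - m‖ ^ 2 := by
          have ha1 : Integrable (fun x => ‖x - EE‖ ^ 2 + 2 * ⟪EE - m, x - EE⟫) ρ :=
            (hnsq EE).add (hinner1.const_mul 2)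
          rw [integral_add ha1 (integrable_const (‖EE - m‖ ^ 2)),
            integral_add (hnsq EE) (hinner1.const_mul 2), integral_const_mul,
            integral_inner (hsub EE), hEx, inner_zero_right, integral_const, ← hSdef]
          simp
  -- identity (II) and the inequality A ≤ c*S - ‖EE-m‖^2 * Z
  have hinner2 : Integrable (fun x => ⟪m - EE, Real.exp (-α * f x) • (x - m)⟫) ρ := by
    have := (innerSL ℝ (m - EE)).integrable_comp (hωsubi m)
    simpa only [innerSL_apply_apply] using this
  have hII : ∫ x, Real.exp (-α * f x) * ‖x - EE‖ ^ 2 ∂ρ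
      = (∫ x, Real.exp (-α * f x) * ‖x - m‖ ^ 2 ∂ρ) + ‖EE - m‖ ^ 2 * Z := by
    have ex : ∀ x : EuclideanSpace ℝ (Fin d),
        Real.exp (-α * f x) * ‖x - EE‖ ^ 2 =
          Real.exp (-α * f x) * ‖x - m‖ ^ 2 +
            2 * ⟪m - EE, Real.exp (-α * f x) • (x - m)⟫ +
            ‖EE - m‖ ^ 2 * Real.exp (-α * f x) := by
      intro x
      have h := norm_add_sq_real (x - m) (m - EE)
      rw [sub_add_sub_cancel] at h
      rw [real_inner_smul_right, real_inner_comm (x - m) (m - EE), norm_sub_rev EE m, h]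
      ring
    calc ∫ x, Real.exp (-α * f x) * ‖x - EE‖ ^ 2 ∂ρ
        = ∫ x, (Real.exp (-α * f x) * ‖x - m‖ ^ 2 +
            2 * ⟪m - EE, Real.exp (-α * f x) • (x - m)⟫ +
            ‖EE - m‖ ^ 2 * Real.exp (-α * f x)) ∂ρ :=
          integral_congr_ae (Filter.Eventually.of_forall ex)
      _ = _ := by
          have ha1 : Integrable (fun x => Real.exp (-α * f x) * ‖x - m‖ ^ 2 +
              2 * ⟪m - EE, Real.exp (-α * f x) • (x - m)⟫) ρ :=
            (hωnsq m).add (hinner2.const_mul 2)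
          rw [integral_add ha1 (hωi.const_mul _),
            integral_add (hωnsq m) (hinner2.const_mul 2), integral_const_mul,
            integral_inner (hωsubi m), hωxm0, inner_zero_right, integral_const_mul, ← hZdef]
          ring
  have hAle : (∫ x, ‖x - EE‖ ^ 2 * (c - Real.exp (-α * f x)) ∂ρ)
      ≤ c * S - ‖EE - m‖ ^ 2 * Z := by
    have e : (fun x => ‖x - EE‖ ^ 2 * (c - Real.exp (-α * f x))) =
        fun x => c * ‖x - EE‖ ^ 2 - Real.exp (-α * f x) * ‖x - EE‖ ^ 2 := by
      funext x; ring
    rw [e, integral_sub ((hnsq EE).const_mul c) (hωnsq EE), integral_const_mul, ← hSdef, hII]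
    have : 0 ≤ ∫ x, Real.exp (-α * f x) * ‖x - m‖ ^ 2 ∂ρ :=
      integral_nonneg fun x => mul_nonneg (hω0 x).le (sq_nonneg _)
    linarith
  have hA0 : 0 ≤ ∫ x, ‖x - EE‖ ^ 2 * (c - Real.exp (-α * f x)) ∂ρ :=
    integral_nonneg fun x => mul_nonneg (sq_nonneg _) (sub_nonneg.2 (hωc x))
  -- Cauchy-Schwarz for the weighted deviation
  have hw0 : ∀ x, 0 ≤ c - Real.exp (-α * f x) := fun x => sub_nonneg.2 (hωc x)
  set p : EuclideanSpace ℝ (Fin d) → ℝ :=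
    fun x => ‖x - EE‖ * Real.sqrt (c - Real.exp (-α * f x)) with hpdef
  set q : EuclideanSpace ℝ (Fin d) → ℝ :=
    fun x => Real.sqrt (c - Real.exp (-α * f x)) with hqdef
  have hpsq : ∀ x, p x ^ 2 = ‖x - EE‖ ^ 2 * (c - Real.exp (-α * f x)) := by
    intro x; rw [hpdef, mul_pow, Real.sq_sqrt (hw0 x)]
  have hqsq : ∀ x, q x ^ 2 = c - Real.exp (-α * f x) := fun x => Real.sq_sqrt (hw0 x)
  have hqmeas : Measurable q := (measurable_const.sub hmeasω).sqrt
  have hpmeas : Measurable p :=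
    ((continuous_id.sub continuous_const).norm.measurable).mul hqmeas
  have hpmem : MemLp p 2 ρ := by
    rw [memLp_two_iff_integrable_sq hpmeas.aestronglyMeasurable]
    have : Integrable (fun x => ‖x - EE‖ ^ 2 * (c - Real.exp (-α * f x))) ρ := by
      have e : (fun x => ‖x - EE‖ ^ 2 * (c - Real.exp (-α * f x))) =
          fun x => c * ‖x - EE‖ ^ 2 - Real.exp (-α * f x) * ‖x - EE‖ ^ 2 := by
        funext x; ring
      rw [e]; exact ((hnsq EE).const_mul c).sub (hωnsq EE)
    exact this.congr (Filter.Eventually.of_forall fun x => (hpsq x).symm)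
  have hqmem : MemLp q 2 ρ := by
    rw [memLp_two_iff_integrable_sq hqmeas.aestronglyMeasurable]
    exact ((integrable_const c).sub hωi).congr
      (Filter.Eventually.of_forall fun x => (hqsq x).symm)
  have hcs := cs_int (fun x => mul_nonneg (norm_nonneg _) (Real.sqrt_nonneg _))
    (fun x => Real.sqrt_nonneg _) hpmem hqmem
  have hpq_eq : ∫ x, p x * q x ∂ρ = ∫ x, ‖(c - Real.exp (-α * f x)) • (x - EE)‖ ∂ρ := by
    refine integral_congr_ae (Filter.Eventually.of_forall fun x => ?_)
    simp only [hpdef, hqdef, norm_smul, Real.norm_eq_abs, abs_of_nonneg (hw0 x)]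
    rw [mul_assoc, Real.mul_self_sqrt (hw0 x), mul_comm]
  have hp2_eq : ∫ x, p x ^ 2 ∂ρ = ∫ x, ‖x - EE‖ ^ 2 * (c - Real.exp (-α * f x)) ∂ρ :=
    integral_congr_ae (Filter.Eventually.of_forall fun x => hpsq x)
  have hq2_eq : ∫ x, q x ^ 2 ∂ρ = c - Z := by
    rw [integral_congr_ae (Filter.Eventually.of_forall fun x => hqsq x)]; exact hwint
  -- bound on Z * ‖EE - m‖
  set t : ℝ := ‖EE - m‖ with htdef
  have ht0 : 0 ≤ t := norm_nonneg _
  have h4 : Z * t ≤ Real.sqrt (∫ x, ‖x - EE‖ ^ 2 * (c - Real.exp (-α * f x)) ∂ρ) *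
      Real.sqrt (c - Z) := by
    have h1 : Z * t = ‖Z • (EE - m)‖ := by
      rw [norm_smul, Real.norm_eq_abs, abs_of_pos hpos, htdef]
    have h2 : Z • (EE - m) = ∫ x, (c - Real.exp (-α * f x)) • (x - EE) ∂ρ := by
      rw [hkey, smul_sub, hZm]
    rw [h1, h2]
    calc ‖∫ x, (c - Real.exp (-α * f x)) • (x - EE) ∂ρ‖
        ≤ ∫ x, ‖(c - Real.exp (-α * f x)) • (x - EE)‖ ∂ρ :=
          norm_integral_le_integral_norm _
      _ = ∫ x, p x * q x ∂ρ := hpq_eq.symm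
      _ ≤ _ := by rw [← hp2_eq, ← hq2_eq]; exact hcs
  have hZc : Z ≤ c := by
    have h := integral_mono hωi (integrable_const c) hωc
    rwa [integral_const, probReal_univ, one_smul] at h
  have hB0 : (0:ℝ) ≤ c - Z := sub_nonneg.2 hZc
  have h5 : (Z * t) ^ 2 ≤ (∫ x, ‖x - EE‖ ^ 2 * (c - Real.exp (-α * f x)) ∂ρ) * (c - Z) := by
    nlinarith [h4, Real.mul_self_sqrt hA0, Real.mul_self_sqrt hB0,
      mul_nonneg hpos.le ht0, Real.sqrt_nonneg (∫ x, ‖x - EE‖ ^ 2 * (c - Real.exp (-α * f x)) ∂ρ),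
      Real.sqrt_nonneg (c - Z)]
  have hS0 : 0 ≤ S := integral_nonneg fun x => sq_nonneg _
  have hmain : Z * (S + t ^ 2) ≤ c * S := by
    have h6 := mul_le_mul_of_nonneg_right hAle hB0
    nlinarith [h5, h6, hc0, hpos, hS0, sq_nonneg t]
  have hsqle : ∫ x, ‖x - m‖ ^ 2 ∂ρ ≤ c * S / Z := by
    rw [hI, le_div_iff₀ hpos]
    nlinarith [hmain]
  -- final Jensen step
  have hmmeas : Measurable fun x : EuclideanSpace ℝ (Fin d) => ‖x - m‖ :=
    (continuous_id.sub continuous_const).norm.measurable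
  have hmmem : MemLp (fun x : EuclideanSpace ℝ (Fin d) => ‖x - m‖) 2 ρ := by
    rw [memLp_two_iff_integrable_sq hmmeas.aestronglyMeasurable]
    exact hnsq m
  have hone : MemLp (fun _ : EuclideanSpace ℝ (Fin d) => (1:ℝ)) 2 ρ := memLp_const 1
  have hjensen : ∫ x, ‖x - m‖ ∂ρ ≤ Real.sqrt (∫ x, ‖x - m‖ ^ 2 ∂ρ) := by
    have h := cs_int (fun x => norm_nonneg _) (fun _ => zero_le_one) hmmem hone
    simpa using h
  constructor
  · have h := norm_integral_le_integral_norm (μ := ρ) (f := fun x => x - m)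
    have e : ∫ x, (x - m) ∂ρ = EE - m := by
      rw [integral_sub hxi (integrable_const m), integral_const, ← hEEdef]
      simp
    rw [e] at h
    exact h
  · calc ∫ x, ‖x - m‖ ∂ρ ≤ Real.sqrt (∫ x, ‖x - m‖ ^ 2 ∂ρ) := hjensen
      _ ≤ Real.sqrt (c * S / Z) := Real.sqrt_le_sqrt hsqle
      _ = Real.sqrt (2 * c * (1 / 2 * S) / Z) := by rw [show 2 * c * (1/2 * S) / Z = c * S / Z by ring]
end
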